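/- arXiv:2512.16088 — 3 statements merged into one kernel-verified Lean document; each statement's English description precedes it below -/
import Mathlib

section
/- For every τ in the upper half-plane H, the derivative of the Jacobi theta function θ at v = 0 satisfies the Jacobi identity θ'(0,τ) = π · θ₁(0,τ) · θ₂(0,τ) · θ₃(0,τ). -/
noncomputable section

/-- `qpow τ x = e^{2πiτx}`, so that `qpow τ j = q^j` with `q = e^{2πiτ}`. -/
def qpow (τ x : ℂ) : ℂ := Complex.exp (2 * (Real.pi : ℂ) * Complex.I * τ * x)

/-- Jacobi theta function
`θ(v,τ) = 2 q^{1/8} sin(πv) ∏_{j=1}^∞ (1−q^j)(1−e^{2πiv}q^j)(1−e^{−2πiv}q^j)`. -/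
def jTheta (v τ : ℂ) : ℂ :=
  2 * qpow τ (1/8) * Complex.sin ((Real.pi : ℂ) * v) *
    ∏' j : ℕ, ((1 - qpow τ ((j : ℂ) + 1)) *
      (1 - Complex.exp (2 * (Real.pi : ℂ) * Complex.I * v) * qpow τ ((j : ℂ) + 1)) *
      (1 - Complex.exp (-(2 * (Real.pi : ℂ) * Complex.I * v)) * qpow τ ((j : ℂ) + 1)))

/-- Jacobi theta function
`θ₁(v,τ) = 2 q^{1/8} cos(πv) ∏_{j=1}^∞ (1−q^j)(1+e^{2πiv}q^j)(1+e^{−2πiv}q^j)`. -/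
def jTheta1 (v τ : ℂ) : ℂ :=
  2 * qpow τ (1/8) * Complex.cos ((Real.pi : ℂ) * v) *
    ∏' j : ℕ, ((1 - qpow τ ((j : ℂ) + 1)) *
      (1 + Complex.exp (2 * (Real.pi : ℂ) * Complex.I * v) * qpow τ ((j : ℂ) + 1)) *
      (1 + Complex.exp (-(2 * (Real.pi : ℂ) * Complex.I * v)) * qpow τ ((j : ℂ) + 1)))

/-- Jacobi theta function
`θ₂(v,τ) = ∏_{j=1}^∞ (1−q^j)(1−e^{2πiv}q^{j−1/2})(1−e^{−2πiv}q^{j−1/2})`. -/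
def jTheta2 (v τ : ℂ) : ℂ :=
  ∏' j : ℕ, ((1 - qpow τ ((j : ℂ) + 1)) *
    (1 - Complex.exp (2 * (Real.pi : ℂ) * Complex.I * v) * qpow τ ((j : ℂ) + 1/2)) *
    (1 - Complex.exp (-(2 * (Real.pi : ℂ) * Complex.I * v)) * qpow τ ((j : ℂ) + 1/2)))

/-- Jacobi theta function
`θ₃(v,τ) = ∏_{j=1}^∞ (1−q^j)(1+e^{2πiv}q^{j−1/2})(1+e^{−2πiv}q^{j−1/2})`. -/
def jTheta3 (v τ : ℂ) : ℂ :=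
  ∏' j : ℕ, ((1 - qpow τ ((j : ℂ) + 1)) *
    (1 + Complex.exp (2 * (Real.pi : ℂ) * Complex.I * v) * qpow τ ((j : ℂ) + 1/2)) *
    (1 + Complex.exp (-(2 * (Real.pi : ℂ) * Complex.I * v)) * qpow τ ((j : ℂ) + 1/2)))

/-- `θ'(0,τ) = ∂θ(v,τ)/∂v |_{v=0}`. -/
def jThetaDeriv (τ : ℂ) : ℂ := deriv (fun v => jTheta v τ) 0

end

open Complex Filter Topology

namespace JacobiAux
set_option maxHeartbeats 1000000

lemma one_add_ne_zero {x : ℂ} (hx : ‖x‖ < 1) : 1 + x ≠ 0 := by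
  intro h
  have hx1 : x = -1 := by linear_combination h
  rw [hx1] at hx
  norm_num at hx

lemma mainProd {c x : ℂ} (hx : ‖x‖ < 1) (hnorm : ∀ j : ℕ, ‖c * x ^ j‖ < 1) :
    Multipliable (fun j : ℕ => 1 + c * x ^ j) ∧ (∏' j : ℕ, (1 + c * x ^ j)) ≠ 0 := by
  have hne : ∀ j : ℕ, 1 + c * x ^ j ≠ 0 := fun j => one_add_ne_zero (hnorm j)
  have hsum : Summable (fun j : ℕ => ‖c * x ^ j‖) := by
    simp only [norm_mul, norm_pow]
    exact (summable_geometric_of_lt_one (norm_nonneg x) hx).mul_left ‖c‖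
  have hlog : Summable (fun j : ℕ => Complex.log (1 + c * x ^ j)) := by
    apply Summable.of_norm_bounded_eventually_nat (hsum.mul_left (3/2))
    have ht : Tendsto (fun j : ℕ => ‖c * x ^ j‖) atTop (𝓝 0) := hsum.tendsto_atTop_zero
    filter_upwards [ht.eventually_le_const (by norm_num : (0:ℝ) < 1/2)] with j hj
    exact Complex.norm_log_one_add_half_le_self hj
  have heq := Complex.cexp_tsum_eq_tprod (f := fun j => 1 + c * x ^ j) hne hlog
  refine ⟨Complex.multipliable_of_summable_log hlog, ?_⟩
  rw [← heq]
  exact Complex.exp_ne_zero _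

lemma norm_lt_one_of_lt {c x : ℂ} (hx : ‖x‖ < 1) (hc : ‖c‖ < 1) (j : ℕ) : ‖c * x ^ j‖ < 1 := by
  calc ‖c * x ^ j‖ = ‖c‖ * ‖x‖ ^ j := by rw [norm_mul, norm_pow]
  _ ≤ ‖c‖ * 1 := by
      gcongr
      exact pow_le_one₀ (norm_nonneg x) hx.le
  _ < 1 := by rwa [mul_one]

lemma mult_congr {f g : ℕ → ℂ} (e : ∀ j, f j = g j) (h : Multipliable f) : Multipliable g :=
  (funext e : f = g) ▸ h

lemma prodIdentity {q r : ℂ} (hq : ‖q‖ < 1) (hr : ‖r‖ < 1) (hr2 : r ^ 2 = q) :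
    (∏' j : ℕ, (1 + q ^ (j + 1))) * (∏' j : ℕ, (1 - r ^ (2 * j + 1))) *
      (∏' j : ℕ, (1 + r ^ (2 * j + 1))) = 1 := by
  have hq2 : ‖q ^ 2‖ < 1 := by
    rw [norm_pow]
    exact pow_lt_one₀ (norm_nonneg q) hq (by norm_num)
  have hr2' : ‖r ^ 2‖ < 1 := by
    rw [norm_pow]
    exact pow_lt_one₀ (norm_nonneg r) hr (by norm_num)
  have hnq : ‖-q‖ < 1 := by rwa [norm_neg]
  have hnr : ‖-r‖ < 1 := by rwa [norm_neg]
  have hnq2 : ‖-(q^2)‖ < 1 := by rwa [norm_neg]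
  -- the six multipliable families
  have mA' := mainProd hq (norm_lt_one_of_lt hq hnq)
  have mB' := mainProd hq (norm_lt_one_of_lt hq hq)
  have mC' := mainProd hr2' (norm_lt_one_of_lt hr2' hnr)
  have mD' := mainProd hr2' (norm_lt_one_of_lt hr2' hr)
  have mE' := mainProd hq2 (norm_lt_one_of_lt hq2 hnq2)
  have mO' := mainProd hq2 (norm_lt_one_of_lt hq2 hnq)
  have mA : Multipliable (fun j : ℕ => 1 - q ^ (j + 1)) :=
    mult_congr (fun j => by ring) mA'.1
  have mB : Multipliable (fun j : ℕ => 1 + q ^ (j + 1)) :=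
    mult_congr (fun j => by ring) mB'.1
  have mC : Multipliable (fun j : ℕ => 1 - r ^ (2 * j + 1)) :=
    mult_congr (fun j => by ring) mC'.1
  have mD : Multipliable (fun j : ℕ => 1 + r ^ (2 * j + 1)) :=
    mult_congr (fun j => by ring) mD'.1
  have mE : Multipliable (fun j : ℕ => 1 - q ^ (2 * j + 1 + 1)) :=
    mult_congr (fun j => by ring) mE'.1
  have mO : Multipliable (fun j : ℕ => 1 - q ^ (2 * j + 1)) :=
    mult_congr (fun j => by ring) mO'.1
  have hA0 : (∏' j : ℕ, (1 - q ^ (j + 1))) ≠ 0 := by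
    have : (∏' j : ℕ, (1 + (-q) * q ^ j)) = ∏' j : ℕ, (1 - q ^ (j + 1)) :=
      tprod_congr (fun j => by ring)
    rw [← this]; exact mA'.2
  -- (ii) A * B = E
  have hAB : (∏' j : ℕ, (1 - q ^ (j + 1))) * (∏' j : ℕ, (1 + q ^ (j + 1)))
      = ∏' j : ℕ, (1 - q ^ (2 * j + 1 + 1)) := by
    rw [← Multipliable.tprod_mul mA mB]
    exact tprod_congr (fun j => by ring)
  -- (iii) C * D = O
  have hCD : (∏' j : ℕ, (1 - r ^ (2 * j + 1))) * (∏' j : ℕ, (1 + r ^ (2 * j + 1)))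
      = ∏' j : ℕ, (1 - q ^ (2 * j + 1)) := by
    rw [← Multipliable.tprod_mul mC mD]
    exact tprod_congr (fun j => by rw [← hr2]; ring)
  -- (i) O * E = A  (even/odd split of A)
  have hOE : (∏' j : ℕ, (1 - q ^ (2 * j + 1))) * (∏' j : ℕ, (1 - q ^ (2 * j + 1 + 1)))
      = ∏' j : ℕ, (1 - q ^ (j + 1)) :=
    tprod_even_mul_odd (f := fun n => 1 - q ^ (n + 1)) mO mE
  -- combine
  apply mul_left_cancel₀ hA0
  rw [mul_one]
  calc (∏' j : ℕ, (1 - q ^ (j + 1))) *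
        ((∏' j : ℕ, (1 + q ^ (j + 1))) * (∏' j : ℕ, (1 - r ^ (2 * j + 1))) *
          (∏' j : ℕ, (1 + r ^ (2 * j + 1))))
      = ((∏' j : ℕ, (1 - q ^ (j + 1))) * (∏' j : ℕ, (1 + q ^ (j + 1)))) *
        ((∏' j : ℕ, (1 - r ^ (2 * j + 1))) * (∏' j : ℕ, (1 + r ^ (2 * j + 1)))) := by ring
    _ = (∏' j : ℕ, (1 - q ^ (2 * j + 1 + 1))) * (∏' j : ℕ, (1 - q ^ (2 * j + 1))) := by
        rw [hAB, hCD]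
    _ = ∏' j : ℕ, (1 - q ^ (j + 1)) := by rw [mul_comm, hOE]

/-- Multipliability of `j ↦ 1 - z * q^(j+1)` for `‖z‖ < ‖q‖⁻¹`. -/
lemma multPhi {q : ℂ} (hq0 : 0 < ‖q‖) (hq : ‖q‖ < 1) {z : ℂ} (hz : ‖z‖ < ‖q‖⁻¹) :
    Multipliable (fun j : ℕ => 1 - z * q ^ (j + 1)) := by
  have hnorm : ∀ j : ℕ, ‖(-(z * q)) * q ^ j‖ < 1 := by
    intro j
    have h1 : ‖(-(z * q)) * q ^ j‖ = ‖z‖ * ‖q‖ ^ (j + 1) := by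
      rw [norm_mul, norm_neg, norm_mul, norm_pow, pow_succ]; ring
    rw [h1]
    calc ‖z‖ * ‖q‖ ^ (j + 1) < ‖q‖⁻¹ * ‖q‖ ^ (j + 1) := by
          apply mul_lt_mul_of_pos_right hz (pow_pos hq0 _)
      _ = ‖q‖ ^ j := by
          rw [pow_succ', ← mul_assoc, inv_mul_cancel₀ (ne_of_gt hq0), one_mul]
      _ ≤ 1 := pow_le_one₀ (norm_nonneg q) hq.le
  exact mult_congr (fun j => by ring) (mainProd hq hnorm).1

lemma contPhi {q : ℂ} (hq0 : 0 < ‖q‖) (hq : ‖q‖ < 1) :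
    ContinuousAt (fun z : ℂ => ∏' j : ℕ, (1 - z * q ^ (j + 1))) 1 := by
  set m : ℝ := ‖q‖⁻¹ with hm
  have hm1 : 1 < m := (one_lt_inv₀ hq0).mpr hq
  -- choose N with m * ‖q‖^(N+1) ≤ 1/2
  obtain ⟨N, hN⟩ : ∃ N : ℕ, m * ‖q‖ ^ (N + 1) ≤ 1 / 2 := by
    have ht : Tendsto (fun n : ℕ => m * ‖q‖ ^ (n + 1)) atTop (𝓝 (m * 0)) := by
      apply Tendsto.const_mul
      exact ((tendsto_pow_atTop_nhds_zero_of_lt_one (norm_nonneg q) hq).comp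
        (tendsto_add_atTop_nat 1))
    rw [mul_zero] at ht
    exact (ht.eventually_le_const (by norm_num : (0:ℝ) < 1/2)).exists
  set s : Set ℂ := Metric.ball 0 m with hs
  have hsopen : IsOpen s := Metric.isOpen_ball
  have h1s : (1 : ℂ) ∈ s := by
    simp only [s, Metric.mem_ball, dist_zero_right, norm_one]
    exact hm1
  have hzs : ∀ z ∈ s, ‖z‖ < m := by
    intro z hz
    simpa [s, Metric.mem_ball, Complex.dist_eq] using hz
  -- key bound for tail terms
  have hbound : ∀ (n : ℕ) (z : ℂ), z ∈ s → ‖z * q ^ (n + N + 1)‖ ≤ (1/2) * ‖q‖ ^ n := by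
    intro n z hz
    have : ‖z * q ^ (n + N + 1)‖ = ‖z‖ * (‖q‖ ^ (N + 1) * ‖q‖ ^ n) := by
      rw [norm_mul, norm_pow, ← pow_add]
      ring_nf
    rw [this]
    calc ‖z‖ * (‖q‖ ^ (N + 1) * ‖q‖ ^ n) ≤ m * (‖q‖ ^ (N + 1) * ‖q‖ ^ n) := by
          apply mul_le_mul_of_nonneg_right (hzs z hz).le
          positivity
      _ = (m * ‖q‖ ^ (N + 1)) * ‖q‖ ^ n := by ring
      _ ≤ (1/2) * ‖q‖ ^ n := by
          apply mul_le_mul_of_nonneg_right hN (by positivity)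
  have hhalf : ∀ (n : ℕ) (z : ℂ), z ∈ s → ‖z * q ^ (n + N + 1)‖ ≤ 1/2 := by
    intro n z hz
    calc ‖z * q ^ (n + N + 1)‖ ≤ (1/2) * ‖q‖ ^ n := hbound n z hz
      _ ≤ (1/2) * 1 := by
          apply mul_le_mul_of_nonneg_left (pow_le_one₀ (norm_nonneg q) hq.le) (by norm_num)
      _ = 1/2 := by norm_num
  have hne : ∀ (n : ℕ) (z : ℂ), z ∈ s → 1 - z * q ^ (n + N + 1) ≠ 0 := by
    intro n z hz h
    have h1 : z * q ^ (n + N + 1) = 1 := by linear_combination -h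
    have := hhalf n z hz
    rw [h1] at this
    norm_num at this
  -- L z = sum of logs of the tail
  have hlogbound : ∀ (n : ℕ) (z : ℂ), z ∈ s →
      ‖Complex.log (1 - z * q ^ (n + N + 1))‖ ≤ (3/4) * ‖q‖ ^ n := by
    intro n z hz
    have h1 : (1 : ℂ) - z * q ^ (n + N + 1) = 1 + (-(z * q ^ (n + N + 1))) := by ring
    rw [h1]
    calc ‖Complex.log (1 + (-(z * q ^ (n + N + 1))))‖
        ≤ (3/2) * ‖-(z * q ^ (n + N + 1))‖ := by
          apply Complex.norm_log_one_add_half_le_self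
          rw [norm_neg]; exact hhalf n z hz
      _ ≤ (3/2) * ((1/2) * ‖q‖ ^ n) := by
          apply mul_le_mul_of_nonneg_left _ (by norm_num)
          rw [norm_neg]; exact hbound n z hz
      _ = (3/4) * ‖q‖ ^ n := by ring
  have hsummable : ∀ z ∈ s, Summable (fun n : ℕ => Complex.log (1 - z * q ^ (n + N + 1))) := by
    intro z hz
    apply Summable.of_norm_bounded
      (((summable_geometric_of_lt_one (norm_nonneg q) hq)).mul_left (3/4))
    exact fun n => hlogbound n z hz
  have hcontL : ContinuousOn
      (fun z : ℂ => ∑' n : ℕ, Complex.log (1 - z * q ^ (n + N + 1))) s := by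
    apply continuousOn_tsum (u := fun n => (3/4) * ‖q‖ ^ n)
    · intro n
      apply ContinuousOn.clog
      · exact (continuous_const.sub (continuous_id.mul continuous_const)).continuousOn
      · intro z hz
        rw [Complex.mem_slitPlane_iff]
        left
        have h1 : (1 - z * q ^ (n + N + 1)).re = 1 - (z * q ^ (n + N + 1)).re := by
          simp [Complex.sub_re]
        rw [h1]
        have h2 : (z * q ^ (n + N + 1)).re ≤ 1/2 :=
          le_trans (Complex.re_le_norm _) (hhalf n z hz)
        linarith
    · exact ((summable_geometric_of_lt_one (norm_nonneg q) hq)).mul_left _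
    · exact fun n z hz => hlogbound n z hz
  -- tail = exp (L z) on s
  have htail : ∀ z ∈ s, (∏' n : ℕ, (1 - z * q ^ (n + N + 1)))
      = Complex.exp (∑' n : ℕ, Complex.log (1 - z * q ^ (n + N + 1))) := by
    intro z hz
    apply HasProd.tprod_eq
    have hfun : (fun n : ℕ => 1 - z * q ^ (n + N + 1))
        = fun n => Complex.exp (Complex.log (1 - z * q ^ (n + N + 1))) :=
      funext fun n => (Complex.exp_log (hne n z hz)).symm
    exact hfun ▸ (hsummable z hz).hasSum.cexp
  -- splitting
  have hsplit : ∀ z ∈ s, (∏' j : ℕ, (1 - z * q ^ (j + 1)))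
      = (∏ j ∈ Finset.range N, (1 - z * q ^ (j + 1))) *
        ∏' n : ℕ, (1 - z * q ^ (n + N + 1)) := by
    intro z hz
    have hmult : Multipliable (fun n : ℕ => 1 - z * q ^ (n + N + 1)) := by
      apply mult_congr (fun n => by ring :
        ∀ n : ℕ, 1 + (-(z * q ^ (N + 1))) * q ^ n = 1 - z * q ^ (n + N + 1))
      apply (mainProd hq _).1
      intro n
      rw [show (-(z * q ^ (N + 1))) * q ^ n = -(z * q ^ (n + N + 1)) by ring, norm_neg]
      exact lt_of_le_of_lt (hhalf n z hz) one_half_lt_one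
    exact (Multipliable.prod_mul_tprod_nat_mul' (f := fun j => 1 - z * q ^ (j + 1)) hmult).symm
  -- conclude
  have hcont2 : ContinuousOn (fun z : ℂ =>
      (∏ j ∈ Finset.range N, (1 - z * q ^ (j + 1))) *
        Complex.exp (∑' n : ℕ, Complex.log (1 - z * q ^ (n + N + 1)))) s := by
    apply ContinuousOn.mul
    · exact continuousOn_finset_prod _ fun j _ =>
        (continuous_const.sub (continuous_id.mul continuous_const)).continuousOn
    · exact Complex.continuous_exp.comp_continuousOn hcontL
  have hcont3 : ContinuousOn (fun z : ℂ => ∏' j : ℕ, (1 - z * q ^ (j + 1))) s := by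
    apply hcont2.congr
    intro z hz
    dsimp only
    rw [hsplit z hz, htail z hz]
  exact hcont3.continuousAt (hsopen.mem_nhds h1s)

lemma contP {q : ℂ} (hq0 : 0 < ‖q‖) (hq : ‖q‖ < 1) :
    ContinuousAt (fun v : ℂ => ∏' j : ℕ,
      ((1 - q ^ (j + 1)) *
       (1 - Complex.exp (2 * (Real.pi : ℂ) * Complex.I * v) * q ^ (j + 1)) *
       (1 - Complex.exp (-(2 * (Real.pi : ℂ) * Complex.I * v)) * q ^ (j + 1)))) 0 := by
  set m : ℝ := ‖q‖⁻¹ with hm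
  have hm1 : 1 < m := (one_lt_inv₀ hq0).mpr hq
  set Φ : ℂ → ℂ := fun z => ∏' j : ℕ, (1 - z * q ^ (j + 1)) with hΦdef
  set U : Set ℂ := {v : ℂ | ‖Complex.exp (2 * (Real.pi : ℂ) * Complex.I * v)‖ < m ∧
    ‖Complex.exp (-(2 * (Real.pi : ℂ) * Complex.I * v))‖ < m} with hU
  have hc1 : Continuous fun v : ℂ => Complex.exp (2 * (Real.pi : ℂ) * Complex.I * v) :=
    Complex.continuous_exp.comp (continuous_const.mul continuous_id)
  have hc2 : Continuous fun v : ℂ => Complex.exp (-(2 * (Real.pi : ℂ) * Complex.I * v)) :=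
    Complex.continuous_exp.comp ((continuous_const.mul continuous_id).neg)
  have hUopen : IsOpen U := by
    apply IsOpen.inter
    · exact isOpen_lt hc1.norm continuous_const
    · exact isOpen_lt hc2.norm continuous_const
  have hU0 : (0 : ℂ) ∈ U := by
    constructor <;> simp [hm1]
  have hmA : Multipliable (fun j : ℕ => 1 - q ^ (j + 1)) := by
    apply mult_congr (fun j => by ring :
      ∀ j : ℕ, 1 - (1 : ℂ) * q ^ (j + 1) = 1 - q ^ (j + 1))
    exact multPhi hq0 hq (by rwa [norm_one])
  have hEq : ∀ v ∈ U, (∏' j : ℕ,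
      ((1 - q ^ (j + 1)) *
       (1 - Complex.exp (2 * (Real.pi : ℂ) * Complex.I * v) * q ^ (j + 1)) *
       (1 - Complex.exp (-(2 * (Real.pi : ℂ) * Complex.I * v)) * q ^ (j + 1))))
      = (∏' j : ℕ, (1 - q ^ (j + 1))) *
        Φ (Complex.exp (2 * (Real.pi : ℂ) * Complex.I * v)) *
        Φ (Complex.exp (-(2 * (Real.pi : ℂ) * Complex.I * v))) := by
    intro v hv
    have hma : Multipliable (fun j : ℕ =>
        1 - Complex.exp (2 * (Real.pi : ℂ) * Complex.I * v) * q ^ (j + 1)) :=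
      multPhi hq0 hq hv.1
    have hmb : Multipliable (fun j : ℕ =>
        1 - Complex.exp (-(2 * (Real.pi : ℂ) * Complex.I * v)) * q ^ (j + 1)) :=
      multPhi hq0 hq hv.2
    rw [show (fun j : ℕ =>
        ((1 - q ^ (j + 1)) *
         (1 - Complex.exp (2 * (Real.pi : ℂ) * Complex.I * v) * q ^ (j + 1)) *
         (1 - Complex.exp (-(2 * (Real.pi : ℂ) * Complex.I * v)) * q ^ (j + 1))))
      = fun j : ℕ =>
        ((fun j : ℕ => (1 - q ^ (j + 1)) *
          (1 - Complex.exp (2 * (Real.pi : ℂ) * Complex.I * v) * q ^ (j + 1))) j *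
         (fun j : ℕ =>
          (1 - Complex.exp (-(2 * (Real.pi : ℂ) * Complex.I * v)) * q ^ (j + 1))) j) from rfl]
    rw [Multipliable.tprod_mul (hmA.mul hma) hmb]
    rw [Multipliable.tprod_mul hmA hma]
  have hcont : ContinuousAt (fun v : ℂ =>
      (∏' j : ℕ, (1 - q ^ (j + 1))) *
        Φ (Complex.exp (2 * (Real.pi : ℂ) * Complex.I * v)) *
        Φ (Complex.exp (-(2 * (Real.pi : ℂ) * Complex.I * v)))) 0 := by
    have e0 : Complex.exp (2 * (Real.pi : ℂ) * Complex.I * (0 : ℂ)) = 1 := by simp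
    have e0' : Complex.exp (-(2 * (Real.pi : ℂ) * Complex.I * (0 : ℂ))) = 1 := by simp
    have hΦc : ContinuousAt Φ 1 := contPhi hq0 hq
    have hΦc1 : ContinuousAt Φ (Complex.exp (2 * (Real.pi : ℂ) * Complex.I * (0 : ℂ))) := by
      rw [e0]; exact hΦc
    have hΦc2 : ContinuousAt Φ (Complex.exp (-(2 * (Real.pi : ℂ) * Complex.I * (0 : ℂ)))) := by
      rw [e0']; exact hΦc
    have h1 : ContinuousAt (Φ ∘ (fun v : ℂ =>
        Complex.exp (2 * (Real.pi : ℂ) * Complex.I * v))) 0 :=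
      ContinuousAt.comp hΦc1 hc1.continuousAt
    have h2 : ContinuousAt (Φ ∘ (fun v : ℂ =>
        Complex.exp (-(2 * (Real.pi : ℂ) * Complex.I * v)))) 0 :=
      ContinuousAt.comp hΦc2 hc2.continuousAt
    exact (continuousAt_const.mul h1).mul h2
  apply hcont.congr
  filter_upwards [hUopen.mem_nhds hU0] with v hv
  exact (hEq v hv).symm

lemma multAux {q : ℂ} (hq : ‖q‖ < 1) :
    Multipliable (fun j : ℕ => 1 - q ^ (j + 1)) ∧
    Multipliable (fun j : ℕ => 1 + q ^ (j + 1)) := by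
  have hnq : ‖-q‖ < 1 := by rwa [norm_neg]
  exact ⟨mult_congr (fun j => by ring) (mainProd hq (norm_lt_one_of_lt hq hnq)).1,
    mult_congr (fun j => by ring) (mainProd hq (norm_lt_one_of_lt hq hq)).1⟩

lemma multAuxOdd {r : ℂ} (hr : ‖r‖ < 1) :
    Multipliable (fun j : ℕ => 1 - r ^ (2 * j + 1)) ∧
    Multipliable (fun j : ℕ => 1 + r ^ (2 * j + 1)) := by
  have hr2 : ‖r ^ 2‖ < 1 := by
    rw [norm_pow]; exact pow_lt_one₀ (norm_nonneg r) hr (by norm_num)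
  have hnr : ‖-r‖ < 1 := by rwa [norm_neg]
  exact ⟨mult_congr (fun j => by ring) (mainProd hr2 (norm_lt_one_of_lt hr2 hnr)).1,
    mult_congr (fun j => by ring) (mainProd hr2 (norm_lt_one_of_lt hr2 hr)).1⟩


end JacobiAux

set_option maxHeartbeats 1000000 in
open JacobiAux in
theorem jacobi_identity (τ : ℂ) (hτ : 0 < τ.im) :
    jThetaDeriv τ = (Real.pi : ℂ) * jTheta1 0 τ * jTheta2 0 τ * jTheta3 0 τ := by
  have hqnorm : ∀ x : ℂ, 0 < x.re → x.im = 0 → ‖qpow τ x‖ < 1 := by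
    intro x hx hx0
    rw [qpow, Complex.norm_exp, Real.exp_lt_one_iff]
    have hre : (2 * (Real.pi : ℂ) * Complex.I * τ * x).re
        = -(2 * Real.pi * (τ.im * x.re)) := by
      simp [Complex.mul_re, Complex.mul_im, hx0]
      ring
    rw [hre]
    have h2 : 0 < 2 * Real.pi * (τ.im * x.re) := by positivity
    linarith
  set q : ℂ := qpow τ 1 with hqdef
  set r : ℂ := qpow τ (1/2) with hrdef
  have hq : ‖q‖ < 1 := hqnorm 1 (by norm_num) (by norm_num)
  have hr : ‖r‖ < 1 := hqnorm (1/2) (by norm_num) (by norm_num)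
  have hq0 : 0 < ‖q‖ := by
    rw [hqdef, qpow]
    exact norm_pos_iff.mpr (Complex.exp_ne_zero _)
  have hr2q : r ^ 2 = q := by
    rw [hqdef, hrdef, qpow, qpow, ← Complex.exp_nat_mul]
    congr 1
    push_cast
    ring
  have hqpow : ∀ j : ℕ, qpow τ ((j : ℂ) + 1) = q ^ (j + 1) := by
    intro j
    rw [hqdef, qpow, qpow, ← Complex.exp_nat_mul]
    congr 1
    push_cast
    ring
  have hqpow2 : ∀ j : ℕ, qpow τ ((j : ℂ) + 1/2) = r ^ (2 * j + 1) := by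
    intro j
    rw [hrdef, qpow, qpow, ← Complex.exp_nat_mul]
    congr 1
    push_cast
    ring
  have mA := (multAux hq).1
  have mB := (multAux hq).2
  have mC := (multAuxOdd hr).1
  have mD := (multAuxOdd hr).2
  -- evaluate jTheta1 at 0
  have hT1 : jTheta1 0 τ = 2 * qpow τ (1/8) *
      ((∏' j : ℕ, (1 - q ^ (j + 1))) * (∏' j : ℕ, (1 + q ^ (j + 1))) *
        (∏' j : ℕ, (1 + q ^ (j + 1)))) := by
    rw [jTheta1]
    simp only [mul_zero, neg_zero, Complex.exp_zero, one_mul, Complex.cos_zero, mul_one]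
    congr 1
    rw [tprod_congr (fun j => by rw [hqpow j] :
      ∀ j : ℕ, (1 - qpow τ ((j : ℂ) + 1)) * (1 + qpow τ ((j : ℂ) + 1)) *
        (1 + qpow τ ((j : ℂ) + 1))
        = (1 - q ^ (j + 1)) * (1 + q ^ (j + 1)) * (1 + q ^ (j + 1)))]
    rw [Multipliable.tprod_mul (mA.mul mB) mB, Multipliable.tprod_mul mA mB]
  have hT2 : jTheta2 0 τ =
      (∏' j : ℕ, (1 - q ^ (j + 1))) * (∏' j : ℕ, (1 - r ^ (2 * j + 1))) *
        (∏' j : ℕ, (1 - r ^ (2 * j + 1))) := by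
    rw [jTheta2]
    simp only [mul_zero, neg_zero, Complex.exp_zero, one_mul]
    rw [tprod_congr (fun j => by rw [hqpow j, hqpow2 j] :
      ∀ j : ℕ, (1 - qpow τ ((j : ℂ) + 1)) * (1 - qpow τ ((j : ℂ) + 1/2)) *
        (1 - qpow τ ((j : ℂ) + 1/2))
        = (1 - q ^ (j + 1)) * (1 - r ^ (2 * j + 1)) * (1 - r ^ (2 * j + 1)))]
    rw [Multipliable.tprod_mul (mA.mul mC) mC, Multipliable.tprod_mul mA mC]
  have hT3 : jTheta3 0 τ =
      (∏' j : ℕ, (1 - q ^ (j + 1))) * (∏' j : ℕ, (1 + r ^ (2 * j + 1))) *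
        (∏' j : ℕ, (1 + r ^ (2 * j + 1))) := by
    rw [jTheta3]
    simp only [mul_zero, neg_zero, Complex.exp_zero, one_mul]
    rw [tprod_congr (fun j => by rw [hqpow j, hqpow2 j] :
      ∀ j : ℕ, (1 - qpow τ ((j : ℂ) + 1)) * (1 + qpow τ ((j : ℂ) + 1/2)) *
        (1 + qpow τ ((j : ℂ) + 1/2))
        = (1 - q ^ (j + 1)) * (1 + r ^ (2 * j + 1)) * (1 + r ^ (2 * j + 1)))]
    rw [Multipliable.tprod_mul (mA.mul mD) mD, Multipliable.tprod_mul mA mD]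
  -- the derivative
  set Pf : ℂ → ℂ := fun v => ∏' j : ℕ,
      ((1 - q ^ (j + 1)) *
       (1 - Complex.exp (2 * (Real.pi : ℂ) * Complex.I * v) * q ^ (j + 1)) *
       (1 - Complex.exp (-(2 * (Real.pi : ℂ) * Complex.I * v)) * q ^ (j + 1))) with hPf
  have hjT : (fun v => jTheta v τ)
      = fun v => 2 * qpow τ (1/8) * Complex.sin ((Real.pi : ℂ) * v) * Pf v := by
    funext v
    rw [jTheta, hPf]
    congr 1
    exact tprod_congr fun j => by rw [hqpow j]
  have hsin : HasDerivAt (fun v : ℂ => Complex.sin ((Real.pi : ℂ) * v)) (Real.pi : ℂ) 0 := by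
    have h := (Complex.hasDerivAt_sin ((Real.pi : ℂ) * 0)).comp 0
      ((hasDerivAt_id (0 : ℂ)).const_mul (Real.pi : ℂ))
    simp [Function.comp_def] at h
    exact h
  have hG : HasDerivAt (fun v : ℂ => 2 * qpow τ (1/8) * Complex.sin ((Real.pi : ℂ) * v))
      (2 * qpow τ (1/8) * (Real.pi : ℂ)) 0 := hsin.const_mul _
  have hPc : ContinuousAt Pf 0 := contP hq0 hq
  have hGs := hasDerivAt_iff_tendsto_slope.mp hG
  have hPt : Tendsto Pf (𝓝[≠] (0 : ℂ)) (𝓝 (Pf 0)) :=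
    hPc.tendsto.mono_left nhdsWithin_le_nhds
  have hmul := hGs.mul hPt
  have heq : (fun v => slope (fun v : ℂ =>
        2 * qpow τ (1/8) * Complex.sin ((Real.pi : ℂ) * v)) 0 v * Pf v)
      =ᶠ[𝓝[≠] (0 : ℂ)] slope (fun v => jTheta v τ) 0 := by
    filter_upwards [self_mem_nhdsWithin] with v hv
    have hv0 : (v : ℂ) ≠ 0 := hv
    rw [hjT, slope_def_field, slope_def_field]
    simp only [mul_zero, Complex.sin_zero, zero_mul, sub_zero]
    field_simp
  have hD : HasDerivAt (fun v => jTheta v τ) (2 * qpow τ (1/8) * (Real.pi : ℂ) * Pf 0) 0 := by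
    rw [hasDerivAt_iff_tendsto_slope]
    exact hmul.congr' heq
  have hP0 : Pf 0 = (∏' j : ℕ, (1 - q ^ (j + 1))) * (∏' j : ℕ, (1 - q ^ (j + 1))) *
      (∏' j : ℕ, (1 - q ^ (j + 1))) := by
    rw [hPf]
    simp only [mul_zero, neg_zero, Complex.exp_zero, one_mul]
    rw [Multipliable.tprod_mul (mA.mul mA) mA, Multipliable.tprod_mul mA mA]
  have hBCD := prodIdentity hq hr hr2q
  rw [jThetaDeriv, hD.deriv, hT1, hT2, hT3, hP0]
  linear_combination (-(2 * qpow τ (1/8) * (Real.pi : ℂ)) *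
    (∏' j : ℕ, (1 - q ^ (j + 1))) ^ 3 *
    ((∏' j : ℕ, (1 + q ^ (j + 1))) * (∏' j : ℕ, (1 - r ^ (2 * j + 1))) *
      (∏' j : ℕ, (1 + r ^ (2 * j + 1))) + 1)) * hBCD
end

section
/- For every τ in the upper half-plane H and every t ∈ ℂ, the theta function θ satisfies the modular S-transformation law θ(t/τ, −1/τ) = (1/i) · √(τ/i) · e^{πit²/τ} · θ(t,τ), where √(τ/i) denotes the principal branch of the square root (well defined since Re(τ/i) > 0 for τ ∈ H). -/
set_option maxHeartbeats 1600000

section ThetaAux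
open Filter Finset Complex Topology Real
namespace TP


lemma hasProd_zero_of_eq_zero {f : ℕ → ℂ} {i₀ : ℕ} (h : f i₀ = 0) : HasProd f 0 := by
  rw [HasProd]
  have : ∀ᶠ s : Finset ℕ in atTop, ∏ i ∈ s, f i = 0 := by
    filter_upwards [eventually_ge_atTop {i₀}] with s hs
    exact Finset.prod_eq_zero (hs (Finset.mem_singleton_self i₀)) h
  exact Tendsto.congr' (this.mono fun s hs => hs.symm) tendsto_const_nhds

lemma summable_log_one_add {f : ℕ → ℂ} (hf : Summable f) (h1 : ∀ n, 1 + f n ≠ 0) :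
    Summable (fun n => Complex.log (1 + f n)) := by
  have h2 : ∀ᶠ n in atTop, ‖Complex.log (1 + f n)‖ ≤ (3/2) * ‖f n‖ := by
    filter_upwards [hf.tendsto_atTop_zero.eventually (Metric.ball_mem_nhds 0 (by norm_num : (0:ℝ) < 1/2))] with n hn
    have : ‖f n‖ ≤ 1/2 := le_of_lt (by simpa using hn)
    exact Complex.norm_log_one_add_half_le_self this
  refine Summable.of_norm_bounded_eventually_nat (hf.norm.mul_left (3/2)) ?_
  exact h2

lemma multipliable_one_add {f : ℕ → ℂ} (hf : Summable f) :
    Multipliable (fun n => 1 + f n) := by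
  by_cases h1 : ∀ n, 1 + f n ≠ 0
  · exact Complex.multipliable_of_summable_log (summable_log_one_add hf h1)
  · push_neg at h1
    obtain ⟨i₀, hi₀⟩ := h1
    exact ⟨0, hasProd_zero_of_eq_zero hi₀⟩

lemma tprod_one_add_ne_zero {f : ℕ → ℂ} (hf : Summable f) (h1 : ∀ n, 1 + f n ≠ 0) :
    (∏' n, (1 + f n)) ≠ 0 := by
  have := Complex.cexp_tsum_eq_tprod (f := fun n => 1 + f n) h1 (summable_log_one_add hf h1)
  rw [← this]
  exact Complex.exp_ne_zero _

lemma tendsto_prod_range {f : ℕ → ℂ} (hf : Multipliable f) :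
    Tendsto (fun m => ∏ k ∈ Finset.range m, f k) atTop (𝓝 (∏' k, f k)) :=
  hf.hasProd.tendsto_prod_nat


noncomputable def bden (p : ℂ) (n : ℕ) : ℂ := ∏ i ∈ Finset.range n, (1 - p ^ (2*(i+1)))

noncomputable def bnum (p : ℂ) (m n : ℕ) : ℂ := ∏ i ∈ Finset.range n, (1 - p ^ (2*(m-n+1+i)))

noncomputable def gb (p : ℂ) (m n : ℕ) : ℂ := bnum p m n / bden p n

lemma one_sub_pow_ne {p : ℂ} (hp : ‖p‖ < 1) (k : ℕ) (hk : 1 ≤ k) : (1 : ℂ) - p ^ k ≠ 0 := by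
  intro h
  have h2 : ‖p ^ k‖ < 1 := by
    rw [norm_pow]
    calc ‖p‖ ^ k ≤ ‖p‖ ^ 1 := pow_le_pow_of_le_one (norm_nonneg p) hp.le hk
    _ < 1 := by simpa using hp
  rw [sub_eq_zero] at h
  rw [← h] at h2; simp at h2

lemma bden_ne_zero {p : ℂ} (hp : ‖p‖ < 1) (n : ℕ) : bden p n ≠ 0 :=
  Finset.prod_ne_zero_iff.2 fun i _ => one_sub_pow_ne hp _ (by omega)

lemma gb_zero (p : ℂ) (m : ℕ) : gb p m 0 = 1 := by simp [gb, bnum, bden]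

lemma gb_self {p : ℂ} (hp : ‖p‖ < 1) (m : ℕ) : gb p m m = 1 := by
  rw [gb, div_eq_one_iff_eq (bden_ne_zero hp m)]
  unfold bnum bden
  exact Finset.prod_congr rfl fun i _ => by congr 2; omega

lemma bnum_succ_left {p : ℂ} {m j : ℕ} (hj : j + 1 ≤ m) :
    bnum p (m+1) (j+1) = (1 - p ^ (2*(m+1))) * bnum p m j := by
  unfold bnum
  rw [Finset.prod_range_succ, mul_comm]
  congr 1
  · congr 2; omega
  · exact Finset.prod_congr rfl fun i hi => by
      simp only [Finset.mem_range] at hi; congr 2; omega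

lemma bnum_succ_right {p : ℂ} {m j : ℕ} (hj : j + 1 ≤ m) :
    bnum p m (j+1) = (1 - p ^ (2*(m-j))) * bnum p m j := by
  unfold bnum
  rw [Finset.prod_range_succ']
  rw [mul_comm]
  congr 1
  · congr 2; omega
  · exact Finset.prod_congr rfl fun i hi => by
      simp only [Finset.mem_range] at hi; congr 2; omega

lemma bden_succ (p : ℂ) (j : ℕ) : bden p (j+1) = bden p j * (1 - p ^ (2*(j+1))) := by
  unfold bden; rw [Finset.prod_range_succ]

/-- q-Pascal identity -/
lemma gb_pascal {p : ℂ} (hp : ‖p‖ < 1) {m k : ℕ} (hk1 : 1 ≤ k) (hkm : k ≤ m) :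
    gb p (m+1) k = gb p m k + p ^ (2*(m+1-k)) * gb p m (k-1) := by
  obtain ⟨j, rfl⟩ := Nat.exists_eq_add_of_le hk1
  rw [show 1 + j = j + 1 by omega] at *
  have hj : j + 1 ≤ m := hkm
  have he1 : 2*(m+1-(j+1)) = 2*(m-j) := by omega
  unfold gb
  rw [bnum_succ_left hj, bnum_succ_right hj, bden_succ, Nat.add_sub_cancel, he1]
  have hd1 : bden p j ≠ 0 := bden_ne_zero hp j
  have hd2 : (1:ℂ) - p ^ (2*(j+1)) ≠ 0 := one_sub_pow_ne hp _ (by omega)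
  have hpow : p ^ (2*(m-j)) * p ^ (2*(j+1)) = p ^ (2*(m+1)) := by
    rw [← pow_add]; congr 1; omega
  have key : (1:ℂ) - p^(2*(m+1)) = (1 - p^(2*(m-j))) + p^(2*(m-j)) * (1 - p^(2*(j+1))) := by
    rw [← hpow]; ring
  rw [key]
  field_simp

lemma gb_eq (p : ℂ) (m n : ℕ) : gb p m n = bnum p m n / bden p n := rfl

lemma e1 (k : ℕ) : (k+1)*k = k*(k-1) + 2*k := by
  cases k with
  | zero => simp
  | succ n => simp only [Nat.add_sub_cancel]; ring

lemma gauss {p : ℂ} (hp : ‖p‖ < 1) (m : ℕ) (y : ℂ) :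
    ∏ j ∈ Finset.range m, (1 + y * (p^2)^j) =
      ∑ n ∈ Finset.range (m+1), gb p m n * p^(n*(n-1)) * y^n := by
  induction m generalizing y with
  | zero => simp [gb_zero]
  | succ m ih =>
    rw [Finset.prod_range_succ, ih, mul_add, mul_one]
    have hsplit : (∑ n ∈ Finset.range (m+1), gb p m n * p^(n*(n-1)) * y^n) * (y * (p^2)^m)
        = ∑ n ∈ Finset.range (m+1), gb p m n * p^(n*(n-1)+2*m) * y^(n+1) := by
      rw [Finset.sum_mul]
      exact Finset.sum_congr rfl fun n _ => by rw [pow_add, pow_mul]; ring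
    rw [hsplit]
    rw [Finset.sum_range_succ' (f := fun n => gb p (m+1) n * p^(n*(n-1)) * y^n),
        Finset.sum_range_succ' (f := fun n => gb p m n * p^(n*(n-1)) * y^n),
        Finset.sum_range_succ (f := fun n => gb p m n * p^(n*(n-1)+2*m) * y^(n+1)),
        Finset.sum_range_succ (f := fun k => gb p (m+1) (k+1) * p^((k+1)*((k+1)-1)) * y^(k+1))]
    have h0 : gb p m 0 * p^(0*(0-1)) * (y:ℂ)^0 = gb p (m+1) 0 * p^(0*(0-1)) * y^0 := by
      rw [gb_zero, gb_zero]
    have hedge : gb p m m * p^(m*(m-1)+2*m) * y^(m+1)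
        = gb p (m+1) (m+1) * p^((m+1)*((m+1)-1)) * y^(m+1) := by
      rw [gb_self hp, gb_self hp]
      congr 2
      simp only [Nat.add_sub_cancel]
      rw [e1 m]
    have hterm : ∀ k ∈ Finset.range m,
        gb p m (k+1) * p^((k+1)*((k+1)-1)) * y^(k+1) + gb p m k * p^(k*(k-1)+2*m) * y^(k+1)
        = gb p (m+1) (k+1) * p^((k+1)*((k+1)-1)) * y^(k+1) := by
      intro k hk
      simp only [Finset.mem_range] at hk
      rw [gb_pascal hp (by omega) (by omega)]
      simp only [Nat.add_sub_cancel]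
      have hexp : p ^ (2*(m+1-(k+1))) * p ^ ((k+1)*k) = p ^ (k*(k-1)+2*m) := by
        rw [← pow_add]; congr 1
        rw [show 2*(m+1-(k+1)) + (k+1)*k = (k+1)*k + 2*(m-k) by omega, e1 k]
        omega
      calc gb p m (k+1) * p^((k+1)*k) * y^(k+1) + gb p m k * p^(k*(k-1)+2*m) * y^(k+1)
          = gb p m (k+1) * p^((k+1)*k) * y^(k+1)
            + gb p m k * (p ^ (2*(m+1-(k+1))) * p ^ ((k+1)*k)) * y^(k+1) := by rw [hexp]
        _ = _ := by ring
    have hsum : ∑ k ∈ Finset.range m, (gb p m (k+1) * p^((k+1)*((k+1)-1)) * y^(k+1))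
        + ∑ k ∈ Finset.range m, (gb p m k * p^(k*(k-1)+2*m) * y^(k+1))
        = ∑ k ∈ Finset.range m, (gb p (m+1) (k+1) * p^((k+1)*((k+1)-1)) * y^(k+1)) := by
      rw [← Finset.sum_add_distrib]
      exact Finset.sum_congr rfl hterm
    linear_combination hsum + hedge + h0
lemma sum_odd (m : ℕ) : ∑ j ∈ Finset.range m, (2*j+1) = m*m := by
  induction m with
  | zero => simp
  | succ m ih => rw [Finset.sum_range_succ, ih]; ring

lemma e2 (n : ℕ) : n*(n-1) + n = n*n := by
  cases n with
  | zero => simp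
  | succ k => simp only [Nat.add_sub_cancel]; ring

lemma star {p x : ℂ} (hp : ‖p‖ < 1) (hp0 : p ≠ 0) (hx : x ≠ 0) (m : ℕ) :
    ∏ k ∈ Finset.range m, ((1 + x*p^(2*k+1)) * (1 + x⁻¹*p^(2*k+1)))
    = (p^(m*m)/x^m) * ∑ n ∈ Finset.range (2*m+1), gb p (2*m) n * p^(n*n) * x^n / p^(2*m*n) := by
  have hg := gauss hp (2*m) (x*p/p^(2*m))
  have hR : ∑ n ∈ Finset.range (2*m+1), gb p (2*m) n * p^(n*(n-1)) * (x*p/p^(2*m))^n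
      = ∑ n ∈ Finset.range (2*m+1), gb p (2*m) n * p^(n*n) * x^n / p^(2*m*n) := by
    refine Finset.sum_congr rfl fun n _ => ?_
    rw [div_pow, mul_pow, ← pow_mul p (2*m) n]
    have h : p^(n*(n-1)) * p^n = p^(n*n) := by rw [← pow_add, e2]
    calc gb p (2*m) n * p^(n*(n-1)) * (x^n * p^n / p^(2*m*n))
        = (p^(n*(n-1)) * p^n) * gb p (2*m) n * x^n / p^(2*m*n) := by ring
      _ = _ := by rw [h]; ring
  have hL : ∏ j ∈ Finset.range (2*m), (1 + (x*p/p^(2*m)) * (p^2)^j)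
      = (x^m/p^(m*m)) * ∏ k ∈ Finset.range m, ((1 + x*p^(2*k+1)) * (1 + x⁻¹*p^(2*k+1))) := by
    have hd : (p:ℂ)^(m+m) ≠ 0 := pow_ne_zero _ hp0
    rw [show 2*m = m + m by ring, Finset.prod_range_add]
    have hf2 : ∀ j ∈ Finset.range m, (1 + (x*p/p^(m+m)) * (p^2)^(m+j)) = 1 + x*p^(2*j+1) := by
      intro j _
      congr 1
      rw [← pow_mul p 2 (m+j)]
      have h : p * p^(2*(m+j)) = p^(m+m) * p^(2*j+1) := by
        rw [← pow_succ', ← pow_add]; congr 1; omega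
      calc x*p/p^(m+m) * p^(2*(m+j)) = x * (p * p^(2*(m+j))) / p^(m+m) := by ring
        _ = x * (p^(m+m) * p^(2*j+1)) / p^(m+m) := by rw [h]
        _ = x * p^(2*j+1) * (p^(m+m) / p^(m+m)) := by ring
        _ = x * p^(2*j+1) := by rw [div_self hd, mul_one]
    rw [Finset.prod_congr rfl hf2]
    have hf1 : ∀ j ∈ Finset.range m, (1 + (x*p/p^(m+m)) * (p^2)^j)
        = (x * p^(2*j+1) / p^(m+m)) * (1 + x⁻¹*p^(2*(m-1-j)+1)) := by
      intro j hj
      simp only [Finset.mem_range] at hj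
      have h1 : p^(2*(m-1-j)+1) * p^(2*j+1) = p^(m+m) := by
        rw [← pow_add]; congr 1; omega
      have h2 : p * (p^2)^j = p^(2*j+1) := by
        rw [← pow_mul, ← pow_succ']
      refine Eq.symm ?_
      calc (x * p^(2*j+1) / p^(m+m)) * (1 + x⁻¹*p^(2*(m-1-j)+1))
          = x * p^(2*j+1) / p^(m+m)
            + (p^(2*(m-1-j)+1) * p^(2*j+1)) / p^(m+m) * (x * x⁻¹) := by ring
        _ = x * p^(2*j+1) / p^(m+m) + 1 := by
            rw [h1, div_self hd, mul_inv_cancel₀ hx, one_mul]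
        _ = 1 + (x*p/p^(m+m)) * (p^2)^j := by rw [← h2]; ring
    rw [Finset.prod_congr rfl hf1, Finset.prod_mul_distrib]
    rw [Finset.prod_range_reflect (fun j => 1 + x⁻¹*p^(2*j+1)) m]
    have hpre : ∏ j ∈ Finset.range m, (x * p^(2*j+1) / p^(m+m)) = x^m / p^(m*m) := by
      rw [Finset.prod_div_distrib, Finset.prod_mul_distrib, Finset.prod_const,
        Finset.prod_pow_eq_pow_sum, sum_odd, Finset.prod_const, ← pow_mul]
      have hd1 : (p:ℂ)^(m*m) ≠ 0 := pow_ne_zero _ hp0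
      have hd2 : (p:ℂ)^((m+m)*m) ≠ 0 := pow_ne_zero _ hp0
      simp only [Finset.card_range]
      rw [div_eq_div_iff hd2 hd1]
      rw [show (m+m)*m = m*m + m*m by ring, pow_add]
      ring
    rw [hpre, Finset.prod_mul_distrib]
    ring
  rw [hR, hL] at hg
  rw [← hg]
  have hxm : (x:ℂ)^m ≠ 0 := pow_ne_zero _ hx
  have hpm : (p:ℂ)^(m*m) ≠ 0 := pow_ne_zero _ hp0
  field_simp
section Limits
variable {p x : ℂ} (hp : ‖p‖ < 1) (hp0 : p ≠ 0) (hx : x ≠ 0)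

/-- summability of c * p^(f k) with f k ≥ k -/
lemma summable_cp (c : ℂ) (f : ℕ → ℕ) (hp : ‖p‖ < 1) (hf : ∀ k, k ≤ f k) :
    Summable (fun k => c * p^(f k)) := by
  refine Summable.of_norm_bounded
    ((summable_geometric_of_lt_one (norm_nonneg p) hp).mul_left ‖c‖) (fun k => ?_)
  rw [norm_mul, norm_pow]
  exact mul_le_mul_of_nonneg_left
    (pow_le_pow_of_le_one (norm_nonneg p) hp.le (hf k)) (norm_nonneg c)

include hp in
lemma summable_p2 : Summable (fun k : ℕ => -(p^(2*(k+1)))) := by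
  have := summable_cp (p := p) (-1) (fun k => 2*(k+1)) hp (fun k => by show k ≤ 2*(k+1); omega)
  refine this.congr fun k => by ring

include hp in
lemma multipliable_den : Multipliable (fun k : ℕ => 1 - p^(2*(k+1))) :=
  (multipliable_one_add (summable_p2 hp)).congr fun k => by ring

include hp in
lemma tendsto_bden : Tendsto (bden p) atTop (𝓝 (∏' k : ℕ, (1 - p^(2*(k+1))))) := by
  have := tendsto_prod_range (multipliable_den hp)
  exact this

include hp in
lemma Pinf_ne : (∏' k : ℕ, (1 - p^(2*(k+1)))) ≠ 0 := by
  have h := tprod_one_add_ne_zero (f := fun k => -(p^(2*(k+1)))) (summable_p2 hp)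
    (fun k => by rw [← sub_eq_add_neg]; exact one_sub_pow_ne hp _ (by omega))
  refine fun hc => h ?_
  rw [← hc]
  exact tprod_congr fun k => by ring

include hp in
lemma bnum_eq_div {m n : ℕ} (hn : n ≤ m) : bnum p m n = bden p m / bden p (m - n) := by
  rw [eq_div_iff (bden_ne_zero hp _), mul_comm]
  unfold bden bnum
  rw [show m = (m-n) + n by omega, Finset.prod_range_add]
  congr 1
  · rw [show (m-n) + n - n = m - n by omega]
  · refine Finset.prod_congr rfl fun i _ => by congr 2; omega

include hp in
lemma exists_pos_le_norm_bden : ∃ c > 0, ∀ n, c ≤ ‖bden p n‖ := by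
  set L := ∏' k : ℕ, (1 - p^(2*(k+1))) with hL
  have hL0 : 0 < ‖L‖ := norm_pos_iff.2 (Pinf_ne hp)
  have hev : ∀ᶠ n in atTop, ‖L‖/2 ≤ ‖bden p n‖ :=
    (tendsto_bden hp).norm.eventually (eventually_ge_nhds (show ‖L‖/2 < ‖L‖ by linarith))
  obtain ⟨N, hN⟩ := eventually_atTop.1 hev
  set c₀ := ((Finset.range (N+1)).image (fun n => ‖bden p n‖)).min' (by simp) with hc₀
  have hc₀pos : 0 < c₀ := by
    have := Finset.min'_mem ((Finset.range (N+1)).image (fun n => ‖bden p n‖)) (by simp)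
    simp only [Finset.mem_image] at this
    obtain ⟨n, _, hn⟩ := this
    rw [hc₀, ← hn]
    exact norm_pos_iff.2 (bden_ne_zero hp n)
  refine ⟨min c₀ (‖L‖/2), lt_min hc₀pos (by linarith), fun n => ?_⟩
  rcases le_or_gt n N with h | h
  · refine le_trans (min_le_left _ _) ?_
    exact Finset.min'_le _ _ (Finset.mem_image_of_mem _ (by simp; omega))
  · exact le_trans (min_le_right _ _) (hN n h.le)

include hp in
lemma norm_bnum_le {M n : ℕ} (hn : n ≤ M) :
    ‖bnum p M n‖ ≤ Real.exp (∑' j : ℕ, ‖p‖^(2*(j+1))) := by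
  have hsum : Summable (fun j : ℕ => ‖p‖^(2*(j+1))) := by
    have := (summable_p2 hp).norm
    refine this.congr fun k => by simp [norm_pow]
  rw [bnum, norm_prod]
  calc ∏ i ∈ Finset.range n, ‖1 - p^(2*(M-n+1+i))‖
      ≤ ∏ i ∈ Finset.range n, (1 + ‖p‖^(2*(M-n+1+i))) := by
        refine Finset.prod_le_prod (fun i _ => norm_nonneg _) (fun i _ => ?_)
        calc ‖1 - p^(2*(M-n+1+i))‖ ≤ ‖(1:ℂ)‖ + ‖p^(2*(M-n+1+i))‖ := norm_sub_le _ _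
          _ = 1 + ‖p‖^(2*(M-n+1+i)) := by rw [norm_one, norm_pow]
    _ ≤ ∏ i ∈ Finset.range n, Real.exp (‖p‖^(2*(M-n+1+i))) := by
        refine Finset.prod_le_prod (fun i _ => by positivity) (fun i _ => ?_)
        linarith [Real.add_one_le_exp (‖p‖^(2*(M-n+1+i)))]
    _ = Real.exp (∑ i ∈ Finset.range n, ‖p‖^(2*(M-n+1+i))) := by rw [Real.exp_sum]
    _ ≤ Real.exp (∑' j : ℕ, ‖p‖^(2*(j+1))) := by
        refine Real.exp_le_exp.2 ?_
        have hre : ∑ i ∈ Finset.range n, ‖p‖^(2*(M-n+1+i))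
            = ∑ j ∈ Finset.Ico (M-n) ((M-n)+n), ‖p‖^(2*(j+1)) := by
          rw [Finset.sum_Ico_eq_sum_range]
          simp only [Nat.add_sub_cancel_left]
          exact Finset.sum_congr rfl fun i _ => by congr 2; omega
        rw [hre]
        exact hsum.sum_le_tsum _ (fun i _ => by positivity)

end Limits

noncomputable def Tcoef (p x : ℂ) (r : ℤ) : ℂ := p^(r.natAbs*r.natAbs) * x^r

noncomputable def Gfun (p : ℂ) (m : ℕ) (r : ℤ) : ℂ :=
  if -(m:ℤ) ≤ r ∧ r ≤ m then gb p (2*m) (r+(m:ℤ)).toNat else 0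

section Main
variable {p x : ℂ}

lemma sum_eq_tsum (hp : ‖p‖ < 1) (hp0 : p ≠ 0) (hx : x ≠ 0) (m : ℕ) :
    (p^(m*m)/x^m) * ∑ n ∈ Finset.range (2*m+1), gb p (2*m) n * p^(n*n) * x^n / p^(2*m*n)
      = ∑' r : ℤ, Gfun p m r * Tcoef p x r := by
  rw [tsum_eq_sum (s := Finset.Icc (-(m:ℤ)) m) (f := fun r => Gfun p m r * Tcoef p x r)
    (fun r hr => by
      simp only [Finset.mem_Icc] at hr
      simp only [Gfun, if_neg (fun hc : -(m:ℤ) ≤ r ∧ r ≤ (m:ℤ) => hr ⟨hc.1, hc.2⟩), zero_mul])]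
  rw [Finset.mul_sum]
  refine Finset.sum_nbij' (i := fun n => (n:ℤ) - m) (j := fun r => (r+(m:ℤ)).toNat)
    ?_ ?_ ?_ ?_ ?_
  · intro n hn; simp only [Finset.mem_range] at hn; simp only [Finset.mem_Icc]; omega
  · intro r hr; simp only [Finset.mem_Icc] at hr; simp only [Finset.mem_range]; omega
  · intro n hn; simp only [Finset.mem_range] at hn; omega
  · intro r hr; simp only [Finset.mem_Icc] at hr; omega
  · intro n hn
    simp only [Finset.mem_range] at hn
    have hcond : -(m:ℤ) ≤ (n:ℤ) - m ∧ (n:ℤ) - m ≤ m := by omega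
    simp only [Gfun, if_pos hcond]
    rw [show ((n:ℤ) - m + m).toNat = n by omega]
    rw [Tcoef]
    have hxr : x^((n:ℤ)-(m:ℤ)) = x^n / x^m := by
      rw [zpow_sub₀ hx, zpow_natCast, zpow_natCast]
    have hnat : ((n:ℤ)-m).natAbs * ((n:ℤ)-m).natAbs + 2*m*n = n*n + m*m := by
      have h1 : ((((n:ℤ)-m).natAbs * ((n:ℤ)-m).natAbs : ℕ) : ℤ) = ((n:ℤ)-m)*((n:ℤ)-m) := by
        rw [Nat.cast_mul]
        exact Int.natAbs_mul_self' _
      have h2 : ((((n:ℤ)-m).natAbs * ((n:ℤ)-m).natAbs + 2*m*n : ℕ) : ℤ) = ((n*n + m*m : ℕ) : ℤ) := by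
        push_cast at h1 ⊢
        rw [h1]; ring
      exact_mod_cast h2
    have hkey : p^(((n:ℤ)-m).natAbs * ((n:ℤ)-m).natAbs) * p^(2*m*n) = p^(n*n) * p^(m*m) := by
      rw [← pow_add, ← pow_add, hnat]
    rw [hxr]
    have hxm : (x:ℂ)^m ≠ 0 := pow_ne_zero _ hx
    have hpmn : (p:ℂ)^(2*m*n) ≠ 0 := pow_ne_zero _ hp0
    field_simp
    linear_combination (-(gb p (2*m) n)) * hkey

lemma tendsto_Gfun (hp : ‖p‖ < 1) (r : ℤ) :
    Tendsto (fun m => Gfun p m r) atTop (𝓝 (∏' k : ℕ, (1 - p^(2*(k+1))))⁻¹) := by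
  set L := ∏' k : ℕ, (1 - p^(2*(k+1))) with hL
  have hLne : L ≠ 0 := Pinf_ne hp
  have hb := tendsto_bden hp
  have h1 : Tendsto (fun m : ℕ => bden p (2*m)) atTop (𝓝 L) :=
    hb.comp (tendsto_atTop_atTop.2 fun b => ⟨b, fun a ha => by omega⟩)
  have h2 : Tendsto (fun m : ℕ => bden p ((m:ℤ)-r).toNat) atTop (𝓝 L) :=
    hb.comp (tendsto_atTop_atTop.2 fun b => ⟨b + r.natAbs, fun a ha => by omega⟩)
  have h3 : Tendsto (fun m : ℕ => bden p ((r+(m:ℤ))).toNat) atTop (𝓝 L) :=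
    hb.comp (tendsto_atTop_atTop.2 fun b => ⟨b + r.natAbs, fun a ha => by omega⟩)
  have hdiv := h1.div (h2.mul h3) (mul_ne_zero hLne hLne)
  have hval : L / (L * L) = L⁻¹ := by field_simp
  rw [hval] at hdiv
  refine hdiv.congr' ?_
  filter_upwards [eventually_ge_atTop r.natAbs] with m hm
  have hcond : -(m:ℤ) ≤ r ∧ r ≤ m := by omega
  have hn2m : (r+(m:ℤ)).toNat ≤ 2*m := by omega
  simp only [Pi.div_apply, Gfun, if_pos hcond]
  rw [gb_eq, bnum_eq_div hp hn2m,
    show 2*m - (r+(m:ℤ)).toNat = ((m:ℤ)-r).toNat by omega, div_div]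

lemma norm_Tcoef_le (x : ℂ) (r : ℤ) :
    ‖Tcoef p x r‖ ≤ ‖p‖^(r.natAbs*r.natAbs) * (max ‖x‖ ‖x⁻¹‖)^(r.natAbs) := by
  rw [Tcoef, norm_mul, norm_pow]
  refine mul_le_mul_of_nonneg_left ?_ (by positivity)
  rcases r with n | n
  · rw [Int.ofNat_eq_coe, zpow_natCast, norm_pow, Int.natAbs_natCast]
    exact pow_le_pow_left₀ (norm_nonneg x) (le_max_left _ _) n
  · have hle : ‖x‖⁻¹ ≤ max ‖x‖ ‖x⁻¹‖ := by rw [← norm_inv]; exact le_max_right _ _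
    rw [zpow_negSucc, norm_inv, norm_pow, ← inv_pow, Int.natAbs_negSucc]
    exact pow_le_pow_left₀ (inv_nonneg.2 (norm_nonneg x)) hle _

theorem triple_product (hp : ‖p‖ < 1) (hp0 : p ≠ 0) (hx : x ≠ 0) :
    (∏' k : ℕ, (1 - p^(2*(k+1)))) * ∏' k : ℕ, ((1 + x*p^(2*k+1)) * (1 + x⁻¹*p^(2*k+1)))
      = ∑' r : ℤ, p^(r.natAbs*r.natAbs) * x^r := by
  set L := ∏' k : ℕ, (1 - p^(2*(k+1))) with hLdef
  have hLne : L ≠ 0 := Pinf_ne hp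
  -- multipliability of the pair product
  have hw : Summable (fun k : ℕ => x*p^(2*k+1) + x⁻¹*p^(2*k+1) + 1*p^(4*k+2)) := by
    refine ((summable_cp x _ hp (fun k => by show k ≤ 2*k+1; omega)).add
      (summable_cp x⁻¹ _ hp (fun k => by show k ≤ 2*k+1; omega))).add
      (summable_cp 1 _ hp (fun k => by show k ≤ 4*k+2; omega))
  have hpairEq : ∀ k : ℕ, 1 + (x*p^(2*k+1) + x⁻¹*p^(2*k+1) + 1*p^(4*k+2))
      = (1 + x*p^(2*k+1)) * (1 + x⁻¹*p^(2*k+1)) := by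
    intro k
    have hinv : x * x⁻¹ = 1 := mul_inv_cancel₀ hx
    have hpow : p^(2*k+1) * p^(2*k+1) = p^(4*k+2) := by rw [← pow_add]; congr 1; omega
    linear_combination (-(p^(2*k+1)*p^(2*k+1)))*hinv - hpow
  have hpair : Multipliable (fun k : ℕ => (1 + x*p^(2*k+1)) * (1 + x⁻¹*p^(2*k+1))) :=
    (multipliable_one_add hw).congr hpairEq
  have hlhs := tendsto_prod_range hpair
  -- the same sequence written via the tsum over ℤ
  have hseq : (fun m => ∏ k ∈ Finset.range m, ((1 + x*p^(2*k+1)) * (1 + x⁻¹*p^(2*k+1))))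
      = fun m => ∑' r : ℤ, Gfun p m r * Tcoef p x r := by
    funext m
    rw [star hp hp0 hx m, sum_eq_tsum hp hp0 hx m]
  -- Tannery setup
  obtain ⟨c, hcpos, hc⟩ := exists_pos_le_norm_bden hp
  set S := ∑' j : ℕ, ‖p‖^(2*(j+1)) with hS
  set K := Real.exp S / c with hK
  have hKpos : 0 < K := div_pos (Real.exp_pos _) hcpos
  set Mx := max ‖x‖ ‖x⁻¹‖ with hMx
  have hMxpos : 0 < Mx := lt_max_of_lt_left (norm_pos_iff.2 hx)
  have hGb : ∀ m r, ‖Gfun p m r‖ ≤ K := by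
    intro m r
    simp only [Gfun]
    split_ifs with hcond
    · have hn2m : (r+(m:ℤ)).toNat ≤ 2*m := by omega
      rw [gb_eq, norm_div]
      exact div_le_div₀ (Real.exp_pos S).le (norm_bnum_le hp hn2m) hcpos (hc _)
    · simpa using hKpos.le
  -- summability of the dominating function
  have hppos : 0 < ‖p‖ := norm_pos_iff.2 hp0
  have hboundnat : Summable (fun n : ℕ => K * (‖p‖^(n*n) * Mx^n)) := by
    obtain ⟨N, hN⟩ : ∃ N, ‖p‖^N * Mx < 1/2 := by
      have htnd : Tendsto (fun N => ‖p‖^N * Mx) atTop (𝓝 (0 * Mx)) :=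
        (tendsto_pow_atTop_nhds_zero_of_lt_one (norm_nonneg p) hp).mul_const Mx
      rw [zero_mul] at htnd
      exact ((htnd.eventually (eventually_lt_nhds (by norm_num : (0:ℝ) < 1/2))).exists)
    refine Summable.of_norm_bounded_eventually_nat
      ((summable_geometric_of_lt_one (r := (1/2 : ℝ)) (by norm_num) (by norm_num)).mul_left K) ?_
    filter_upwards [eventually_ge_atTop N] with n hn
    have h1 : ‖p‖^(n*n) ≤ (‖p‖^N)^n := by
      rw [← pow_mul]
      exact pow_le_pow_of_le_one (norm_nonneg p) hp.le (Nat.mul_le_mul_right n hn)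
    have h2 : ‖p‖^(n*n) * Mx^n ≤ (‖p‖^N * Mx)^n := by
      rw [mul_pow]
      exact mul_le_mul_of_nonneg_right h1 (by positivity)
    have h3 : (‖p‖^N * Mx)^n ≤ (1/2)^n :=
      pow_le_pow_left₀ (by positivity) hN.le n
    rw [Real.norm_of_nonneg (by positivity)]
    exact mul_le_mul_of_nonneg_left (h2.trans h3) hKpos.le
  have hbound : Summable (fun r : ℤ => K * (‖p‖^(r.natAbs*r.natAbs) * Mx^(r.natAbs))) := by
    refine Summable.of_nat_of_neg (hboundnat.congr fun n => by simp) (hboundnat.congr fun n => by simp)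
  -- Tannery
  have htan : Tendsto (fun m => ∑' r : ℤ, Gfun p m r * Tcoef p x r) atTop
      (𝓝 (∑' r : ℤ, L⁻¹ * Tcoef p x r)) := by
    refine tendsto_tsum_of_dominated_convergence hbound
      (fun r => (tendsto_Gfun hp r).mul_const (Tcoef p x r)) ?_
    filter_upwards with m r
    rw [norm_mul]
    exact mul_le_mul (hGb m r) (norm_Tcoef_le x r) (norm_nonneg _) hKpos.le
  rw [hseq] at hlhs
  have heq := tendsto_nhds_unique hlhs htan
  rw [tsum_mul_left] at heq
  rw [show (∑' r : ℤ, p^(r.natAbs*r.natAbs) * x^r) = ∑' r : ℤ, Tcoef p x r from rfl]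
  rw [heq, ← mul_assoc, mul_inv_cancel₀ hLne, one_mul]

end Main

lemma norm_exp_pi_I_tau {τ : ℂ} (hτ : 0 < τ.im) : ‖cexp ((π:ℂ) * I * τ)‖ < 1 := by
  rw [Complex.norm_exp]
  have hre : ((π:ℂ) * I * τ).re = -(π * τ.im) := by
    simp [Complex.mul_re, Complex.mul_im]
  rw [hre]
  exact Real.exp_lt_one_iff.2 (by nlinarith [Real.pi_pos])

lemma qpow_nat (τ : ℂ) (j : ℕ) :
    qpow τ ((j : ℂ) + 1) = (cexp ((π:ℂ) * I * τ))^(2*(j+1)) := by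
  rw [qpow, ← Complex.exp_nat_mul]
  congr 1
  push_cast
  ring

/-- `jTheta` in terms of `jacobiTheta₂`. -/
lemma jTheta_eq {τ : ℂ} (hτ : 0 < τ.im) (v : ℂ) :
    jTheta v τ = -I * cexp ((π:ℂ)*I*τ/4 + (π:ℂ)*I*v) * jacobiTheta₂ (v + (1+τ)/2) τ := by
  set p := cexp ((π:ℂ) * I * τ) with hpdef
  have hp : ‖p‖ < 1 := norm_exp_pi_I_tau hτ
  have hp0 : p ≠ 0 := Complex.exp_ne_zero _
  set e2v := cexp (2*(π:ℂ)*I*v) with he2vdef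
  have he2v0 : e2v ≠ 0 := Complex.exp_ne_zero _
  set x := -e2v * p with hxdef
  have hx : x ≠ 0 := by
    rw [hxdef, neg_mul, neg_ne_zero]
    exact mul_ne_zero he2v0 hp0
  -- identify the three factor families
  have hA : Multipliable (fun k : ℕ => 1 - p^(2*(k+1))) := multipliable_den hp
  have hB : Multipliable (fun k : ℕ => 1 - e2v * p^(2*(k+1))) := by
    refine (multipliable_one_add (f := fun k => -e2v * p^(2*(k+1)))
      (summable_cp (-e2v) _ hp (fun k => by show k ≤ 2*(k+1); omega))).congr fun k => by ring
  have hC : Multipliable (fun k : ℕ => 1 - e2v⁻¹ * p^(2*(k+1))) := by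
    refine (multipliable_one_add (f := fun k => -e2v⁻¹ * p^(2*(k+1)))
      (summable_cp (-e2v⁻¹) _ hp (fun k => by show k ≤ 2*(k+1); omega))).congr fun k => by ring
  have hC0 : Multipliable (fun k : ℕ => 1 - e2v⁻¹ * p^(2*k)) := by
    refine (multipliable_one_add (f := fun k => -e2v⁻¹ * p^(2*k))
      (summable_cp (-e2v⁻¹) _ hp (fun k => by show k ≤ 2*k; omega))).congr fun k => by ring
  -- rewrite the jTheta product
  have hprod : (∏' j : ℕ, ((1 - qpow τ ((j : ℂ) + 1)) *
      (1 - cexp (2*(π:ℂ)*I*v) * qpow τ ((j : ℂ) + 1)) *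
      (1 - cexp (-(2*(π:ℂ)*I*v)) * qpow τ ((j : ℂ) + 1))))
      = (∏' k : ℕ, (1 - p^(2*(k+1)))) * (∏' k : ℕ, (1 - e2v * p^(2*(k+1))))
        * (∏' k : ℕ, (1 - e2v⁻¹ * p^(2*(k+1)))) := by
    rw [← hA.tprod_mul hB, ← (hA.mul hB).tprod_mul hC]
    refine tprod_congr fun j => ?_
    rw [qpow_nat, Complex.exp_neg]
  -- peel off k = 0 from the C₀ family
  have hpeel : (∏' k : ℕ, (1 - e2v⁻¹ * p^(2*k)))
      = (1 - e2v⁻¹) * ∏' k : ℕ, (1 - e2v⁻¹ * p^(2*(k+1))) := by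
    rw [tprod_eq_zero_mul' (f := fun k : ℕ => 1 - e2v⁻¹ * p^(2*k)) hC]
    congr 1
    simp
  -- pair product identification
  have hpairB : ∀ k : ℕ, (1 + x*p^(2*k+1)) = 1 - e2v * p^(2*(k+1)) := by
    intro k
    rw [hxdef]
    rw [show (2*(k+1)) = 2*k+1+1 by omega, pow_succ]
    ring
  have hpairC : ∀ k : ℕ, (1 + x⁻¹*p^(2*k+1)) = 1 - e2v⁻¹ * p^(2*k) := by
    intro k
    rw [hxdef, show (2*k+1) = 2*k+1 from rfl]
    rw [neg_mul, inv_neg, mul_inv, pow_succ]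
    field_simp
    ring
  have hpair : (∏' k : ℕ, ((1 + x*p^(2*k+1)) * (1 + x⁻¹*p^(2*k+1))))
      = (∏' k : ℕ, (1 - e2v * p^(2*(k+1)))) * ((1 - e2v⁻¹) * ∏' k : ℕ, (1 - e2v⁻¹ * p^(2*(k+1)))) := by
    rw [← hpeel, ← hB.tprod_mul hC0]
    exact tprod_congr fun k => by rw [hpairB k, hpairC k]
  -- the sum side is jacobiTheta₂
  have hsum : (∑' r : ℤ, p^(r.natAbs*r.natAbs) * x^r) = jacobiTheta₂ (v + (1+τ)/2) τ := by
    rw [jacobiTheta₂]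
    refine tsum_congr fun r => ?_
    rw [jacobiTheta₂_term]
    have hxexp : x = cexp (2*(π:ℂ)*I*(v + (1+τ)/2)) := by
      rw [hxdef, he2vdef, hpdef]
      have : cexp (2*(π:ℂ)*I*(v + (1+τ)/2)) = cexp (2*(π:ℂ)*I*v) * cexp ((π:ℂ)*I) * cexp ((π:ℂ)*I*τ) := by
        rw [← Complex.exp_add, ← Complex.exp_add]
        congr 1
        ring
      rw [this, Complex.exp_pi_mul_I]
      ring
    have hxr : x^r = cexp ((r:ℂ) * (2*(π:ℂ)*I*(v + (1+τ)/2))) := by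
      rw [hxexp, ← Complex.exp_int_mul]
    have hpr : p^(r.natAbs*r.natAbs) = cexp (((r:ℂ)*(r:ℂ)) * ((π:ℂ)*I*τ)) := by
      rw [hpdef, ← Complex.exp_nat_mul]
      congr 1
      have h1 : ((r.natAbs*r.natAbs : ℕ) : ℤ) = r*r := by
        rw [Nat.cast_mul]; exact Int.natAbs_mul_self' r
      have hcast : ((r.natAbs * r.natAbs : ℕ) : ℂ) = (r:ℂ)*(r:ℂ) := by
        calc ((r.natAbs*r.natAbs : ℕ) : ℂ) = (((r.natAbs*r.natAbs : ℕ) : ℤ) : ℂ) := by rw [Int.cast_natCast]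
          _ = ((r*r : ℤ) : ℂ) := by rw [h1]
          _ = (r:ℂ)*(r:ℂ) := by push_cast; ring
      rw [hcast]
    rw [hpr, hxr, ← Complex.exp_add]
    congr 1
    ring
  -- the sine prefactor
  have hsin : 2 * qpow τ (1/8) * Complex.sin ((π:ℂ) * v)
      = -I * cexp ((π:ℂ)*I*τ/4 + (π:ℂ)*I*v) * (1 - e2v⁻¹) := by
    have hq8 : qpow τ (1/8) = cexp ((π:ℂ)*I*τ/4) := by rw [qpow]; congr 1; ring
    set a := cexp ((π:ℂ)*I*v) with hadef
    have ha : a ≠ 0 := Complex.exp_ne_zero _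
    have e1 : cexp (-((π:ℂ)*v)*I) = a⁻¹ := by
      rw [← Complex.exp_neg]; congr 1; ring
    have e2 : cexp (((π:ℂ)*v)*I) = a := by rw [hadef]; congr 1; ring
    have e3 : e2v⁻¹ = (a*a)⁻¹ := by
      rw [he2vdef, hadef, ← Complex.exp_add]
      congr 2
      ring
    rw [Complex.sin, hq8, Complex.exp_add, e1, e2, e3]
    field_simp
    ring
  rw [jTheta, hprod, hsin]
  have htp := triple_product hp hp0 hx
  rw [hpair] at htp
  rw [hsum] at htp
  calc -I * cexp ((π:ℂ)*I*τ/4 + (π:ℂ)*I*v) * (1 - e2v⁻¹) *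
        ((∏' k : ℕ, (1 - p^(2*(k+1)))) * (∏' k : ℕ, (1 - e2v * p^(2*(k+1))))
          * (∏' k : ℕ, (1 - e2v⁻¹ * p^(2*(k+1)))))
      = -I * cexp ((π:ℂ)*I*τ/4 + (π:ℂ)*I*v) *
        ((∏' k : ℕ, (1 - p^(2*(k+1)))) * ((∏' k : ℕ, (1 - e2v * p^(2*(k+1)))) *
          ((1 - e2v⁻¹) * ∏' k : ℕ, (1 - e2v⁻¹ * p^(2*(k+1)))))) := by ring
    _ = -I * cexp ((π:ℂ)*I*τ/4 + (π:ℂ)*I*v) * jacobiTheta₂ (v + (1+τ)/2) τ := by rw [htp]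
theorem theta_final (τ : ℂ) (hτ : 0 < τ.im) (t : ℂ) :
    jTheta (t / τ) (-1 / τ) =
      (1 / Complex.I) * (τ / Complex.I) ^ ((1 : ℂ) / 2) *
        Complex.exp ((Real.pi : ℂ) * Complex.I * t ^ 2 / τ) * jTheta t τ := by

  have hτ0 : τ ≠ 0 := fun h => by simp [h] at hτ
  have hτ' : 0 < (-1/τ).im := by
    rw [div_eq_mul_inv, neg_one_mul, neg_im, inv_im, neg_div, neg_neg]
    exact div_pos hτ (normSq_pos.mpr hτ0)
  have hz : (t + τ/2 - 1/2)/τ = t/τ + (1 + -1/τ)/2 := by field_simp; ring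
  have hc0 : (-I*τ) ≠ 0 := mul_ne_zero (neg_ne_zero.2 I_ne_zero) hτ0
  have hcpow : ((-I*τ) ^ (1/2 : ℂ)) ≠ 0 := by
    rw [Complex.cpow_def_of_ne_zero hc0]; exact Complex.exp_ne_zero _
  have hFE := jacobiTheta₂_functional_equation (t + τ/2 - 1/2) τ
  have hJ : jacobiTheta₂ ((t + τ/2 - 1/2)/τ) (-1/τ)
      = (-I*τ)^(1/2:ℂ) * cexp ((π:ℂ)*I*(t + τ/2 - 1/2)^2/τ) * jacobiTheta₂ (t + τ/2 - 1/2) τ := by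
    have key : ∀ (c e e' J : ℂ), c ≠ 0 → e * e' = 1 → c * e * (1/c * e' * J) = J := by
      intro c e e' J hc hee
      calc c * e * (1/c * e' * J) = (e*e') * (c * (1/c)) * J := by ring
        _ = J := by rw [hee, one_div, mul_inv_cancel₀ hc, one_mul, one_mul]
    have he : cexp ((π:ℂ)*I*(t + τ/2 - 1/2)^2/τ) * cexp (-(π:ℂ) * I * (t + τ/2 - 1/2) ^ 2 / τ) = 1 := by
      rw [← Complex.exp_add, show (π:ℂ)*I*(t + τ/2 - 1/2)^2/τ + -(π:ℂ) * I * (t + τ/2 - 1/2) ^ 2 / τ = 0 by ring,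
        Complex.exp_zero]
    rw [hFE]
    exact (key _ _ _ _ hcpow he).symm
  have hshift : jacobiTheta₂ (t + τ/2 - 1/2) τ = jacobiTheta₂ (t + (1+τ)/2) τ := by
    rw [show t + (1+τ)/2 = (t + τ/2 - 1/2) + 1 by ring, jacobiTheta₂_add_left]
  have hI2 : cexp (((π/2:ℝ):ℂ) * I) = I := by
    rw [Complex.exp_mul_I, ← Complex.ofReal_cos, ← Complex.ofReal_sin,
      Real.cos_pi_div_two, Real.sin_pi_div_two]
    simp
  have hexp2 : cexp (-((π:ℂ)*I)/2) = -I := by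
    rw [show -((π:ℂ)*I)/2 = -(((π/2:ℝ):ℂ) * I) by push_cast; ring, Complex.exp_neg, hI2,
      Complex.inv_I]
  have hsc : (-I) * cexp ((π:ℂ)*I*(-1/τ)/4 + (π:ℂ)*I*(t/τ)) * cexp ((π:ℂ)*I*(t + τ/2 - 1/2)^2/τ)
      = (1/I) * cexp ((π:ℂ)*I*t^2/τ) * (-I) * cexp ((π:ℂ)*I*τ/4 + (π:ℂ)*I*t) := by
    have harg : ((π:ℂ)*I*(-1/τ)/4 + (π:ℂ)*I*(t/τ)) + (π:ℂ)*I*(t + τ/2 - 1/2)^2/τ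
        = -((π:ℂ)*I)/2 + (((π:ℂ)*I*t^2/τ) + ((π:ℂ)*I*τ/4 + (π:ℂ)*I*t)) := by
      field_simp
      ring
    rw [mul_assoc (-I), ← Complex.exp_add, harg, Complex.exp_add, Complex.exp_add, hexp2]
    simp only [one_div, Complex.inv_I]
    ring
  rw [jTheta_eq hτ' (t/τ), jTheta_eq hτ t, ← hz, hJ, hshift]
  rw [show τ/I = -I*τ by rw [div_eq_mul_inv, Complex.inv_I]; ring]
  linear_combination ((-I*τ)^(1/2:ℂ) * jacobiTheta₂ (t + (1+τ)/2) τ) * hsc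

end TP
end ThetaAux

theorem theta_S_transformation (τ : ℂ) (hτ : 0 < τ.im) (t : ℂ) :
    jTheta (t / τ) (-1 / τ) =
      (1 / Complex.I) * (τ / Complex.I) ^ ((1 : ℂ) / 2) *
        Complex.exp ((Real.pi : ℂ) * Complex.I * t ^ 2 / τ) * jTheta t τ :=
  TP.theta_final τ hτ t
end

section
/- For every τ in the upper half-plane H and every t ∈ ℂ, the theta function θ₃ satisfies the modular S-transformation law θ₃(t/τ, −1/τ) = √(τ/i) · e^{πit²/τ} · θ₃(t,τ), where √(τ/i) denotes the principal branch of the square root (well defined since Re(τ/i) > 0 for τ ∈ H). -/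
namespace JTP

open Finset



/-- Gaussian binomial coefficient (in a parameter `q : ℂ`). -/
def G (q : ℂ) : ℕ → ℕ → ℂ
  | 0, 0 => 1
  | 0, _+1 => 0
  | _+1, 0 => 1
  | n+1, k+1 => G q n (k+1) + q ^ (n - k) * G q n k

lemma G_zero (q : ℂ) (n : ℕ) : G q n 0 = 1 := by cases n <;> rfl

lemma G_eq_zero (q : ℂ) : ∀ {n k : ℕ}, n < k → G q n k = 0 := by
  intro n
  induction n with
  | zero => intro k h; cases k with
    | zero => omega
    | succ k => rfl
  | succ n ih =>
    intro k h
    cases k with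
    | zero => omega
    | succ k =>
      rw [G, ih (by omega), ih (by omega), mul_zero, add_zero]

lemma G_diag (q : ℂ) (n : ℕ) : G q n n = 1 := by
  induction n with
  | zero => rfl
  | succ n ih => rw [G, G_eq_zero q (by omega), ih, zero_add, Nat.sub_self, pow_zero, one_mul]

/-- The q-binomial theorem (Gauss), with `q = x^2`. -/
lemma qbinom (x z : ℂ) (n : ℕ) :
    ∏ j ∈ range n, (1 + z * x ^ (2 * j)) =
      ∑ k ∈ range (n + 1), G (x ^ 2) n k * x ^ (k * (k - 1)) * z ^ k := by
  induction n with
  | zero => simp [G]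
  | succ n ih =>
    have key : ∀ k ∈ range (n + 1),
        G (x ^ 2) (n + 1) (k + 1) * x ^ ((k + 1) * (k + 1 - 1)) * z ^ (k + 1) =
          G (x ^ 2) n (k + 1) * x ^ ((k + 1) * (k + 1 - 1)) * z ^ (k + 1) +
            G (x ^ 2) n k * x ^ (k * (k - 1)) * z ^ k * (z * x ^ (2 * n)) := by
      intro k hk
      rw [mem_range] at hk
      have hkn : k ≤ n := by omega
      have h2 : (x ^ 2) ^ (n - k) * x ^ ((k + 1) * (k + 1 - 1)) =
          x ^ (k * (k - 1)) * x ^ (2 * n) := by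
        rw [← pow_mul, ← pow_add, ← pow_add]
        congr 1
        obtain ⟨m, rfl⟩ := Nat.exists_eq_add_of_le hkn
        cases k with
        | zero => simp
        | succ k => simp only [Nat.add_sub_cancel, Nat.succ_sub_one]; ring_nf; omega
      rw [G, add_mul, add_mul]
      congr 1
      linear_combination G (x ^ 2) n k * z ^ (k + 1) * h2
    rw [prod_range_succ, ih,
      sum_range_succ' (fun k => G (x ^ 2) (n + 1) k * x ^ (k * (k - 1)) * z ^ k),
      sum_congr rfl key, sum_add_distrib,
      sum_range_succ (fun k => G (x ^ 2) n (k + 1) * x ^ ((k + 1) * (k + 1 - 1)) * z ^ (k + 1)),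
      G_eq_zero (x ^ 2) (by omega : n < n + 1)]
    rw [sum_range_succ' (fun k => G (x ^ 2) n k * x ^ (k * (k - 1)) * z ^ k), mul_add, mul_one,
      add_mul, sum_mul,
      sum_range_succ' (fun k => G (x ^ 2) n k * x ^ (k * (k - 1)) * z ^ k * (z * x ^ (2 * n)))]
    simp only [G_zero, pow_zero, mul_one, one_mul, Nat.zero_mul, zero_mul, mul_zero, add_zero]
    ring


/-- Partial products of the Euler function: `A q m = ∏_{j=1}^m (1 - q^j)`. -/
def A (q : ℂ) (m : ℕ) : ℂ := ∏ j ∈ range m, (1 - q ^ (j + 1))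

lemma A_zero (q : ℂ) : A q 0 = 1 := rfl

lemma A_succ (q : ℂ) (m : ℕ) : A q (m + 1) = A q m * (1 - q ^ (m + 1)) :=
  prod_range_succ _ _

lemma G_mul_A (q : ℂ) : ∀ n k : ℕ, k ≤ n → G q n k * A q k * A q (n - k) = A q n := by
  intro n
  induction n with
  | zero => intro k hk; interval_cases k; simp [G, A_zero]
  | succ n ih =>
    intro k hk
    cases k with
    | zero => simp [G_zero, A_zero]
    | succ k =>
      rcases Nat.lt_or_ge k n with hkn | hkn
      · have h1 := ih (k + 1) (by omega)
        have h2 := ih k (by omega)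
        have e2 : n - k = (n - (k + 1)) + 1 := by omega
        have e3 : q ^ (n - k) * q ^ (k + 1) = q ^ (n + 1) := by
          rw [← pow_add]; congr 1; omega
        have ha : A q (k + 1) = A q k * (1 - q ^ (k + 1)) := A_succ q k
        have hb : A q (n - k) = A q (n - (k + 1)) * (1 - q ^ (n - k)) := by
          rw [e2, A_succ, ← e2]
        rw [Nat.succ_sub_succ]
        calc G q (n + 1) (k + 1) * A q (k + 1) * A q (n - k)
            = G q n (k + 1) * A q (k + 1) * (A q (n - (k + 1)) * (1 - q ^ (n - k)))
              + q ^ (n - k) * (1 - q ^ (k + 1)) * (G q n k * A q k * A q (n - k)) := by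
              rw [G]
              linear_combination G q n (k + 1) * A q (k + 1) * hb +
                q ^ (n - k) * G q n k * A q (n - k) * ha
          _ = A q n * (1 - q ^ (n - k)) + q ^ (n - k) * (1 - q ^ (k + 1)) * A q n := by
              rw [← mul_assoc, h1, h2]
          _ = A q (n + 1) := by rw [A_succ]; linear_combination (-(A q n)) * e3
      · have hk2 : k = n := by omega
        subst hk2
        rw [G, G_eq_zero q (by omega), zero_add, Nat.sub_self, pow_zero, one_mul, G_diag,
          one_mul, Nat.sub_self, A_zero, mul_one]

lemma sum_odd (N : ℕ) : ∑ j ∈ range N, (2 * j + 1) = N ^ 2 := by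
  induction N with
  | zero => rfl
  | succ N ih => rw [sum_range_succ, ih]; ring

/-- The symmetrized finite product identity. -/
lemma symm_prod (x w : ℂ) (hx : x ≠ 0) (hw : w ≠ 0) (N : ℕ) :
    ∏ j ∈ range N, ((1 + w * x ^ (2 * j + 1)) * (1 + w⁻¹ * x ^ (2 * j + 1))) =
      ∑ k ∈ range (2 * N + 1),
        G (x ^ 2) (2 * N) k * x ^ (((k : ℤ) - N) ^ 2) * w ^ ((k : ℤ) - N) := by
  -- rewrite each second factor
  have pair : ∀ j : ℕ, (1 + w * x ^ (2 * j + 1)) * (1 + w⁻¹ * x ^ (2 * j + 1)) =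
      (w⁻¹ * x ^ (2 * j + 1)) * ((1 + w * x ^ (2 * j + 1)) * (1 + w * x ^ (-(2 * (j : ℤ) + 1)))) := by
    intro j
    have h1 : x ^ (2 * j + 1) ≠ 0 := pow_ne_zero _ hx
    have h2 : (x : ℂ) ^ (-(2 * (j : ℤ) + 1)) = (x ^ (2 * j + 1))⁻¹ := by
      rw [show -(2 * (j : ℤ) + 1) = -((2 * j + 1 : ℕ) : ℤ) by omega, zpow_neg, zpow_natCast]
    rw [h2]
    field_simp
    ring
  rw [prod_congr rfl (fun j _ => pair j), prod_mul_distrib, prod_mul_distrib, prod_mul_distrib]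
  have e1 : (∏ _j ∈ range N, w⁻¹) = w ^ (-(N : ℤ)) := by
    rw [prod_const, card_range, inv_pow, ← zpow_natCast, ← zpow_neg]
  have e2 : (∏ j ∈ range N, x ^ (2 * j + 1)) = x ^ ((N : ℤ) ^ 2) := by
    rw [prod_pow_eq_pow_sum, sum_odd, ← zpow_natCast]
    norm_cast
  -- the reflected product
  have e3 : (∏ j ∈ range N, (1 + w * x ^ (-(2 * (j : ℤ) + 1)))) =
      ∏ m ∈ range N, (1 + w * x ^ (2 * (m : ℤ) + 1 - 2 * N)) := by
    rw [← prod_range_reflect]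
    refine prod_congr rfl fun m hm => ?_
    rw [mem_range] at hm
    rw [show -(2 * ((N - 1 - m : ℕ) : ℤ) + 1) = 2 * (m : ℤ) + 1 - 2 * N by omega]
  have e4 : (∏ j ∈ range N, (1 + w * x ^ (2 * j + 1))) =
      ∏ m ∈ range N, (1 + w * x ^ (2 * ((N + m : ℕ) : ℤ) + 1 - 2 * N)) := by
    refine prod_congr rfl fun m hm => ?_
    rw [show (2 * ((N + m : ℕ) : ℤ) + 1 - 2 * N) = ((2 * m + 1 : ℕ) : ℤ) by push_cast; ring,
      zpow_natCast]
  rw [e1, e2, e3, e4]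
  have e5 : (∏ m ∈ range N, (1 + w * x ^ (2 * ((N + m : ℕ) : ℤ) + 1 - 2 * N))) *
        (∏ m ∈ range N, (1 + w * x ^ (2 * (m : ℤ) + 1 - 2 * N))) =
      ∏ m ∈ range (2 * N), (1 + w * x ^ (2 * (m : ℤ) + 1 - 2 * N)) := by
    rw [show 2 * N = N + N from two_mul N, prod_range_add, mul_comm]
  rw [e5]
  -- apply the q-binomial theorem with z = w * x^(1-2N)
  have e6 : (∏ m ∈ range (2 * N), (1 + w * x ^ (2 * (m : ℤ) + 1 - 2 * N))) =
      ∏ m ∈ range (2 * N), (1 + (w * x ^ (1 - 2 * (N : ℤ))) * x ^ (2 * m)) := by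
    refine prod_congr rfl fun m hm => ?_
    rw [mul_assoc, ← zpow_natCast x (2 * m), ← zpow_add₀ hx]
    congr 3
    push_cast
    ring
  rw [e6, qbinom x (w * x ^ (1 - 2 * (N : ℤ))) (2 * N), mul_sum]
  refine sum_congr rfl fun k hk => ?_
  have hcast : ((k * (k - 1) : ℕ) : ℤ) = (k : ℤ) * ((k : ℤ) - 1) := by
    cases k with
    | zero => simp
    | succ k => push_cast [Nat.succ_sub_one]; ring
  rw [mul_pow, ← zpow_natCast x (k * (k - 1)), ← zpow_natCast w k,
    ← zpow_natCast (x ^ (1 - 2 * (N : ℤ))) k, ← zpow_mul, hcast]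
  calc w ^ (-(N:ℤ)) * x ^ ((N:ℤ)^2) *
        (G (x ^ 2) (2 * N) k * x ^ ((k:ℤ) * ((k:ℤ) - 1)) * (w ^ (k:ℤ) * x ^ ((1 - 2 * (N:ℤ)) * k)))
      = G (x ^ 2) (2 * N) k * (x ^ ((N:ℤ)^2) * x ^ ((k:ℤ) * ((k:ℤ) - 1)) * x ^ ((1 - 2 * (N:ℤ)) * k)) *
        (w ^ (-(N:ℤ)) * w ^ (k:ℤ)) := by ring
    _ = G (x ^ 2) (2 * N) k * x ^ (((k : ℤ) - N) ^ 2) * w ^ ((k : ℤ) - N) := by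
        rw [← zpow_add₀ hx, ← zpow_add₀ hx, ← zpow_add₀ hw,
          show (N:ℤ)^2 + (k:ℤ)*((k:ℤ)-1) + (1-2*(N:ℤ))*(k:ℤ) = ((k:ℤ)-N)^2 by ring,
          show -(N:ℤ) + (k:ℤ) = (k:ℤ)-(N:ℤ) by ring]

section Analysis

variable {q : ℂ}

lemma one_sub_pow_ne (hq : ‖q‖ < 1) (j : ℕ) : 1 - q ^ (j + 1) ≠ 0 := by
  intro h
  have h1 : ‖q ^ (j + 1)‖ < 1 := by
    rw [norm_pow]
    exact pow_lt_one₀ (norm_nonneg _) hq (by omega)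
  have h2 : q ^ (j + 1) = 1 := by linear_combination -h
  rw [h2, norm_one] at h1
  exact lt_irrefl _ h1

lemma summable_log_one_sub (hq : ‖q‖ < 1) :
    Summable (fun j : ℕ => Complex.log (1 - q ^ (j + 1))) := by
  refine Summable.of_norm_bounded_eventually_nat (g := fun j => 3 / 2 * ‖q‖ ^ j) ?_ ?_
  · exact (summable_geometric_of_lt_one (norm_nonneg _) hq).mul_left _
  · have h0 : Filter.Tendsto (fun j : ℕ => ‖q‖ ^ (j + 1)) Filter.atTop (nhds 0) := by
      exact (tendsto_pow_atTop_nhds_zero_of_lt_one (norm_nonneg q) hq).comp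
        (Filter.tendsto_add_atTop_nat 1)
    have h1 : ∀ᶠ j : ℕ in Filter.atTop, ‖q‖ ^ (j + 1) ≤ 1 / 2 := by
      refine h0.eventually (eventually_le_nhds ?_)
      norm_num
    filter_upwards [h1] with j hj
    have hz : ‖-(q ^ (j + 1))‖ ≤ 1 / 2 := by rwa [norm_neg, norm_pow]
    have := Complex.norm_log_one_add_half_le_self hz
    rw [← sub_eq_add_neg] at this
    refine this.trans ?_
    have : ‖q‖ ^ (j + 1) ≤ ‖q‖ ^ j :=
      pow_le_pow_of_le_one (norm_nonneg _) hq.le (by omega)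
    rw [norm_neg, norm_pow]
    nlinarith [norm_nonneg q, pow_nonneg (norm_nonneg q) j]

lemma A_tendsto (hq : ‖q‖ < 1) :
    Filter.Tendsto (A q) Filter.atTop
      (nhds (Complex.exp (∑' j : ℕ, Complex.log (1 - q ^ (j + 1))))) := by
  have hs := (summable_log_one_sub hq).hasSum.tendsto_sum_nat
  have h2 := (Complex.continuous_exp.tendsto _).comp hs
  refine h2.congr fun N => ?_
  simp only [Function.comp]
  rw [Complex.exp_sum]
  exact prod_congr rfl fun j _ => Complex.exp_log (one_sub_pow_ne hq j)

lemma A_ne_zero (hq : ‖q‖ < 1) (m : ℕ) : A q m ≠ 0 :=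
  prod_ne_zero_iff.mpr fun j _ => one_sub_pow_ne hq j

open Filter Topology in
lemma tendsto_theta_partial_prod (x w : ℂ) (hx : x ≠ 0) (hw : w ≠ 0) (hx1 : ‖x‖ < 1)
    (hsum : Summable fun n : ℤ => ‖x ^ (n ^ 2) * w ^ n‖) :
    Tendsto (fun N => ∏ j ∈ range N,
        ((1 - (x ^ 2) ^ (j + 1)) * (1 + w * x ^ (2 * j + 1)) * (1 + w⁻¹ * x ^ (2 * j + 1))))
      atTop (𝓝 (∑' n : ℤ, x ^ (n ^ 2) * w ^ n)) := by
  set q : ℂ := x ^ 2 with hq_def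
  have hq : ‖q‖ < 1 := by
    rw [hq_def, norm_pow]
    exact pow_lt_one₀ (norm_nonneg _) hx1 (by omega)
  set L : ℂ := Complex.exp (∑' j : ℕ, Complex.log (1 - q ^ (j + 1))) with hL_def
  have hA : Tendsto (A q) atTop (𝓝 L) := A_tendsto hq
  have hL : L ≠ 0 := Complex.exp_ne_zero _
  -- upper bound for ‖A q m‖
  obtain ⟨B, hB⟩ : ∃ B : ℝ, ∀ m, ‖A q m‖ ≤ B := by
    obtain ⟨B, hB⟩ := (hA.norm.bddAbove_range)
    exact ⟨B, fun m => hB ⟨m, rfl⟩⟩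
  -- lower bound for ‖A q m‖
  obtain ⟨δ, hδ0, hδ⟩ : ∃ δ : ℝ, 0 < δ ∧ ∀ m, δ ≤ ‖A q m‖ := by
    have hpos : ∀ m, 0 < ‖A q m‖ := fun m => norm_pos_iff.mpr (A_ne_zero hq m)
    have hLpos : 0 < ‖L‖ := norm_pos_iff.mpr hL
    have hev : ∀ᶠ m in atTop, ‖L‖ / 2 ≤ ‖A q m‖ := by
      have : Tendsto (fun m => ‖A q m‖) atTop (𝓝 ‖L‖) := hA.norm
      exact this.eventually_const_le (half_lt_self hLpos)
    obtain ⟨M, hM⟩ := eventually_atTop.mp hev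
    set δ₁ : ℝ := (Finset.range (M + 1)).inf' (by simp) (fun m => ‖A q m‖) with hδ₁
    refine ⟨min δ₁ (‖L‖ / 2), lt_min ?_ (half_pos hLpos), fun m => ?_⟩
    · rw [hδ₁, lt_inf'_iff]
      exact fun i _ => hpos i
    · rcases le_or_gt m M with h | h
      · exact le_trans (min_le_left _ _)
          (inf'_le _ (by simpa using Nat.lt_succ_of_le h))
      · exact le_trans (min_le_right _ _) (hM m h.le)
  have hB0 : 0 ≤ B := (norm_nonneg _).trans (hB 0)
  -- coefficient via the Euler products
  have key : ∀ (N : ℕ) (n : ℤ), n.natAbs ≤ N →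
      A q N * G q (2 * N) ((n + N).toNat) =
        A q N * A q (2 * N) / (A q ((n + N).toNat) * A q (2 * N - (n + N).toNat)) := by
    intro N n hn
    have hk : (n + N).toNat ≤ 2 * N := by omega
    have h2 : 2 * N - (n + N).toNat = 2 * N - (n + N).toNat := rfl
    have hGA := G_mul_A q (2 * N) ((n + N).toNat) hk
    rw [eq_div_iff (mul_ne_zero (A_ne_zero hq _) (A_ne_zero hq _))]
    linear_combination A q N * hGA
  set g : ℕ → ℤ → ℂ := fun N n => if n.natAbs ≤ N then
      A q N * G q (2 * N) ((n + N).toNat) * (x ^ (n ^ 2) * w ^ n) else 0 with hg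
  -- the finite product identity, in tsum form
  have hfin : ∀ N : ℕ, (∏ j ∈ range N,
      ((1 - q ^ (j + 1)) * (1 + w * x ^ (2 * j + 1)) * (1 + w⁻¹ * x ^ (2 * j + 1)))) =
      ∑' n : ℤ, g N n := by
    intro N
    have hsplit : (∏ j ∈ range N,
        ((1 - q ^ (j + 1)) * (1 + w * x ^ (2 * j + 1)) * (1 + w⁻¹ * x ^ (2 * j + 1)))) =
        A q N * ∏ j ∈ range N, ((1 + w * x ^ (2 * j + 1)) * (1 + w⁻¹ * x ^ (2 * j + 1))) := by
      rw [A, ← prod_mul_distrib]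
      exact prod_congr rfl fun j _ => by ring
    rw [hsplit, symm_prod x w hx hw N, mul_sum]
    rw [tsum_eq_sum (s := Finset.Icc (-(N : ℤ)) N) (f := g N) (fun n hn => by
      rw [Finset.mem_Icc] at hn
      rw [hg]
      exact if_neg (by omega))]
    refine (sum_nbij' (fun (k : ℕ) => (k : ℤ) - N) (fun (n : ℤ) => (n + N).toNat)
      ?_ ?_ ?_ ?_ ?_)
    · intro k hk
      rw [mem_range] at hk
      rw [Finset.mem_Icc]
      omega
    · intro n hn
      rw [Finset.mem_Icc] at hn
      rw [mem_range]
      omega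
    · intro k hk; omega
    · intro n hn; rw [Finset.mem_Icc] at hn; omega
    · intro k hk
      rw [mem_range] at hk
      rw [hg]
      simp only
      rw [if_pos (by omega)]
      have e1 : (((k : ℤ) - N) + N).toNat = k := by omega
      rw [e1]
      ring
  -- pointwise convergence of the coefficients
  have hpt : ∀ n : ℤ, Tendsto (fun N => g N n) atTop (𝓝 (x ^ (n ^ 2) * w ^ n)) := by
    intro n
    have h2N : Tendsto (fun N : ℕ => 2 * N) atTop atTop :=
      tendsto_atTop_atTop.mpr fun b => ⟨b, fun a ha => by omega⟩
    have he1 : Tendsto (fun N : ℕ => (n + N).toNat) atTop atTop :=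
      tendsto_atTop_atTop.mpr fun b => ⟨b + n.natAbs, fun a ha => by omega⟩
    have he2 : Tendsto (fun N : ℕ => 2 * N - (n + N).toNat) atTop atTop :=
      tendsto_atTop_atTop.mpr fun b => ⟨b + n.natAbs, fun a ha => by omega⟩
    have hquot : Tendsto (fun N => A q N * A q (2 * N) /
        (A q ((n + N).toNat) * A q (2 * N - (n + N).toNat))) atTop (𝓝 1) := by
      have h := (hA.mul (hA.comp h2N)).div ((hA.comp he1).mul (hA.comp he2))
        (mul_ne_zero hL hL)
      rw [div_self (mul_ne_zero hL hL)] at h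
      exact h
    have h := hquot.mul_const (x ^ (n ^ 2) * w ^ n)
    rw [one_mul] at h
    refine Tendsto.congr' ?_ h
    filter_upwards [eventually_ge_atTop n.natAbs] with N hN
    rw [hg]
    simp only
    rw [if_pos hN, key N n hN]
  -- uniform bound
  have hbd : ∀ (N : ℕ) (n : ℤ), ‖g N n‖ ≤ B * B / (δ * δ) * ‖x ^ (n ^ 2) * w ^ n‖ := by
    intro N n
    by_cases hn : n.natAbs ≤ N
    · rw [hg]
      simp only
      rw [if_pos hn, key N n hn, norm_mul]
      refine mul_le_mul_of_nonneg_right ?_ (norm_nonneg _)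
      rw [norm_div, norm_mul, norm_mul]
      exact div_le_div₀ (mul_nonneg hB0 hB0)
        (mul_le_mul (hB _) (hB _) (norm_nonneg _) hB0)
        (by positivity)
        (mul_le_mul (hδ _) (hδ _) hδ0.le (norm_nonneg _))
    · rw [hg]
      simp only
      rw [if_neg hn, norm_zero]
      positivity
  have hmain := tendsto_tsum_of_dominated_convergence
    (hsum.mul_left (B * B / (δ * δ))) hpt (Filter.Eventually.of_forall fun N n => hbd N n)
  exact Tendsto.congr (fun N => (hfin N).symm) hmain

open Filter Topology in
lemma multipliable_theta_prod (x w : ℂ) (hw : w ≠ 0) (hx1 : ‖x‖ < 1) :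
    Multipliable (fun j : ℕ =>
      (1 - (x ^ 2) ^ (j + 1)) * (1 + w * x ^ (2 * j + 1)) * (1 + w⁻¹ * x ^ (2 * j + 1))) := by
  set f : ℕ → ℂ := fun j =>
      (1 - (x ^ 2) ^ (j + 1)) * (1 + w * x ^ (2 * j + 1)) * (1 + w⁻¹ * x ^ (2 * j + 1)) with hf
  set K : ℝ := 1 + ‖w‖ + ‖w⁻¹‖ with hK
  have hK1 : 1 ≤ K := by
    have := norm_nonneg w
    have := norm_nonneg w⁻¹
    rw [hK]; linarith
  set C1 : ℝ := 3 * K + 3 * K ^ 2 + K ^ 3 with hC1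
  have hC1pos : 0 < C1 := by rw [hC1]; nlinarith
  have hbound : ∀ j : ℕ, ‖f j - 1‖ ≤ C1 * ‖x‖ ^ (j + 1) := by
    intro j
    set a : ℂ := (x ^ 2) ^ (j + 1) with ha_def
    set b : ℂ := w * x ^ (2 * j + 1) with hb_def
    set c : ℂ := w⁻¹ * x ^ (2 * j + 1) with hc_def
    set u : ℝ := ‖x‖ ^ (j + 1) with hu_def
    have hu0 : (0 : ℝ) ≤ u := by rw [hu_def]; positivity
    have hu1 : u ≤ 1 := by
      rw [hu_def]; exact pow_le_one₀ (norm_nonneg _) hx1.le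
    have hxp : ‖x‖ ^ (2 * j + 1) ≤ u := by
      rw [hu_def]
      exact pow_le_pow_of_le_one (norm_nonneg _) hx1.le (by omega)
    have ha : ‖a‖ ≤ K * u := by
      rw [ha_def, norm_pow, norm_pow, ← pow_mul]
      have h1 : ‖x‖ ^ (2 * (j + 1)) ≤ u := by
        rw [hu_def]
        exact pow_le_pow_of_le_one (norm_nonneg _) hx1.le (by omega)
      nlinarith
    have hb : ‖b‖ ≤ K * u := by
      rw [hb_def, norm_mul, norm_pow]
      have hw1 : ‖w‖ ≤ K := by rw [hK]; have := norm_nonneg w⁻¹; linarith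
      nlinarith [norm_nonneg w]
    have hc : ‖c‖ ≤ K * u := by
      rw [hc_def, norm_mul, norm_pow]
      have hw1 : ‖w⁻¹‖ ≤ K := by rw [hK]; have := norm_nonneg w; linarith
      nlinarith [norm_nonneg w⁻¹]
    have hexp : f j - 1 = -a + b + c - a * b - a * c + b * c - a * b * c := by
      rw [hf, ha_def, hb_def, hc_def]; dsimp only; ring
    have tri : ‖-a + b + c - a * b - a * c + b * c - a * b * c‖ ≤
        ‖a‖ + ‖b‖ + ‖c‖ + ‖a‖ * ‖b‖ + ‖a‖ * ‖c‖ + ‖b‖ * ‖c‖ + ‖a‖ * ‖b‖ * ‖c‖ := by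
      refine le_trans (norm_sub_le _ _) ?_
      rw [norm_mul, norm_mul]
      refine add_le_add ?_ le_rfl
      refine le_trans (norm_add_le _ _) ?_
      rw [norm_mul]
      refine add_le_add ?_ le_rfl
      refine le_trans (norm_sub_le _ _) ?_
      rw [norm_mul]
      refine add_le_add ?_ le_rfl
      refine le_trans (norm_sub_le _ _) ?_
      rw [norm_mul]
      refine add_le_add ?_ le_rfl
      refine le_trans (norm_add_le _ _) ?_
      refine add_le_add ?_ le_rfl
      simpa [norm_neg] using norm_add_le (-a) b
    have hK0 : (0 : ℝ) ≤ K := by linarith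
    have hKu0 : (0 : ℝ) ≤ K * u := mul_nonneg hK0 hu0
    have hsq : (K * u) * (K * u) ≤ K ^ 2 * u := by
      nlinarith [mul_nonneg (mul_nonneg (mul_nonneg hK0 hK0) hu0) (by linarith : (0:ℝ) ≤ 1 - u)]
    have hab : ‖a‖ * ‖b‖ ≤ K ^ 2 * u :=
      le_trans (mul_le_mul ha hb (norm_nonneg _) hKu0) hsq
    have hac : ‖a‖ * ‖c‖ ≤ K ^ 2 * u :=
      le_trans (mul_le_mul ha hc (norm_nonneg _) hKu0) hsq
    have hbc : ‖b‖ * ‖c‖ ≤ K ^ 2 * u :=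
      le_trans (mul_le_mul hb hc (norm_nonneg _) hKu0) hsq
    have habc : ‖a‖ * ‖b‖ * ‖c‖ ≤ K ^ 3 * u := by
      have h1 : ‖a‖ * ‖b‖ * ‖c‖ ≤ (K ^ 2 * u) * (K * u) :=
        mul_le_mul hab hc (norm_nonneg _) (by positivity)
      refine h1.trans ?_
      nlinarith [mul_nonneg (mul_nonneg (mul_nonneg (mul_nonneg hK0 hK0) hK0) hu0)
        (by linarith : (0:ℝ) ≤ 1 - u)]
    rw [hexp, hC1]
    refine le_trans tri ?_
    linarith
  -- choose a shift after which everything is small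
  have htend : Tendsto (fun j : ℕ => C1 * ‖x‖ ^ (j + 1)) atTop (𝓝 0) := by
    have h0 : Tendsto (fun j : ℕ => ‖x‖ ^ (j + 1)) atTop (𝓝 0) :=
      (tendsto_pow_atTop_nhds_zero_of_lt_one (norm_nonneg x) hx1).comp
        (tendsto_add_atTop_nat 1)
    simpa using h0.const_mul C1
  obtain ⟨J, hJ⟩ := eventually_atTop.mp
    (htend.eventually (eventually_le_nhds (by norm_num : (0:ℝ) < 1/2)))
  have hsmall : ∀ j : ℕ, ‖f (j + J) - 1‖ ≤ 1 / 2 := fun j =>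
    le_trans (hbound (j + J)) (hJ (j + J) (by omega))
  have hne0 : ∀ j : ℕ, f (j + J) ≠ 0 := by
    intro j h0
    have := hsmall j
    rw [h0] at this
    norm_num at this
  have hlog : Summable (fun j : ℕ => Complex.log (f (j + J))) := by
    refine Summable.of_norm_bounded_eventually_nat
      (g := fun j => 3 / 2 * (C1 * ‖x‖ ^ (J + 1)) * ‖x‖ ^ j)
      (((summable_geometric_of_lt_one (norm_nonneg _) hx1).mul_left _)) ?_
    filter_upwards with j
    have he : (1 : ℂ) + (f (j + J) - 1) = f (j + J) := by ring
    have h1 := Complex.norm_log_one_add_half_le_self (z := f (j + J) - 1) (hsmall j)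
    rw [he] at h1
    refine h1.trans ?_
    have h2 := hbound (j + J)
    have h3 : ‖x‖ ^ (j + J + 1) = ‖x‖ ^ (J + 1) * ‖x‖ ^ j := by
      rw [← pow_add]; congr 1; omega
    rw [h3] at h2
    have h4 : 3 / 2 * ‖f (j + J) - 1‖ ≤ 3 / 2 * (C1 * (‖x‖ ^ (J + 1) * ‖x‖ ^ j)) :=
      mul_le_mul_of_nonneg_left h2 (by norm_num)
    refine h4.trans (le_of_eq ?_)
    ring
  have hp : HasProd (fun j : ℕ => f (j + J)) (∏' j : ℕ, f (j + J)) := by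
    have := (Complex.hasProd_of_hasSum_log hne0 hlog.hasSum).multipliable.hasProd
    exact this
  exact ⟨_, hp.prod_range_mul⟩

open Filter Topology in
/-- The Jacobi triple product, in abstract form. -/
theorem tprod_theta_eq (x w : ℂ) (hx : x ≠ 0) (hw : w ≠ 0) (hx1 : ‖x‖ < 1)
    (hsum : Summable fun n : ℤ => ‖x ^ (n ^ 2) * w ^ n‖) :
    (∏' j : ℕ, ((1 - (x ^ 2) ^ (j + 1)) * (1 + w * x ^ (2 * j + 1)) *
        (1 + w⁻¹ * x ^ (2 * j + 1)))) = ∑' n : ℤ, x ^ (n ^ 2) * w ^ n := by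
  have hm := multipliable_theta_prod x w hw hx1
  exact tendsto_nhds_unique hm.hasProd.tendsto_prod_nat
    (tendsto_theta_partial_prod x w hx hw hx1 hsum)

end Analysis

end JTP

namespace JTP

open Complex Real

theorem jTheta3_eq_jacobiTheta₂ (τ : ℂ) (hτ : 0 < τ.im) (t : ℂ) :
    jTheta3 t τ = jacobiTheta₂ t τ := by
  set x : ℂ := Complex.exp ((π : ℂ) * I * τ) with hx_def
  set w : ℂ := Complex.exp (2 * (π : ℂ) * I * t) with hw_def
  have hx : x ≠ 0 := Complex.exp_ne_zero _
  have hw : w ≠ 0 := Complex.exp_ne_zero _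
  have hre : ((π : ℂ) * I * τ).re = -(π * τ.im) := by
    rw [show (π : ℂ) * I * τ = ((π : ℂ) * τ) * I by ring, Complex.mul_I_re]
    simp [Complex.ofReal_mul]
  have hx1 : ‖x‖ < 1 := by
    rw [hx_def, Complex.norm_exp, hre, Real.exp_lt_one_iff]
    have := Real.pi_pos
    nlinarith
  have hq2 : Complex.exp (2 * (π : ℂ) * I * τ) = x ^ 2 := by
    rw [hx_def, sq, ← Complex.exp_add]
    congr 1
    ring
  have h1 : ∀ j : ℕ, qpow τ ((j : ℂ) + 1) = (x ^ 2) ^ (j + 1) := by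
    intro j
    rw [qpow, show (2 * (π : ℂ) * I * τ * ((j : ℂ) + 1)) =
      ((j + 1 : ℕ) : ℂ) * (2 * (π : ℂ) * I * τ) by push_cast; ring,
      Complex.exp_nat_mul, hq2]
  have h2 : ∀ j : ℕ, qpow τ ((j : ℂ) + 1/2) = x ^ (2 * j + 1) := by
    intro j
    rw [qpow, show (2 * (π : ℂ) * I * τ * ((j : ℂ) + 1/2)) =
      ((2 * j + 1 : ℕ) : ℂ) * ((π : ℂ) * I * τ) by push_cast; ring,
      Complex.exp_nat_mul, hx_def]
  have hwi : Complex.exp (-(2 * (π : ℂ) * I * t)) = w⁻¹ := by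
    rw [Complex.exp_neg, hw_def]
  have hterm : ∀ n : ℤ, x ^ (n ^ 2) * w ^ n = jacobiTheta₂_term n t τ := by
    intro n
    rw [jacobiTheta₂_term, hx_def, hw_def, ← Complex.exp_int_mul, ← Complex.exp_int_mul,
      ← Complex.exp_add]
    congr 1
    push_cast
    ring
  have hsum : Summable fun n : ℤ => ‖x ^ (n ^ 2) * w ^ n‖ := by
    have hs0 := summable_pow_mul_jacobiTheta₂_term_bound |t.im| hτ 0
    simp only [pow_zero, one_mul] at hs0
    refine hs0.of_nonneg_of_le (fun n => norm_nonneg _) fun n => ?_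
    rw [hterm n]
    exact norm_jacobiTheta₂_term_le hτ (le_refl |t.im|) (le_refl τ.im) n
  have hcong : jTheta3 t τ = ∏' j : ℕ, ((1 - (x ^ 2) ^ (j + 1)) *
      (1 + w * x ^ (2 * j + 1)) * (1 + w⁻¹ * x ^ (2 * j + 1))) := by
    rw [jTheta3]
    exact tprod_congr fun j => by rw [h1 j, h2 j, hwi, hw_def]
  rw [hcong, tprod_theta_eq x w hx hw hx1 hsum, jacobiTheta₂]
  exact tsum_congr hterm

end JTP

open Complex Real in
theorem theta3_S_transformation (τ : ℂ) (hτ : 0 < τ.im) (t : ℂ) :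
    jTheta3 (t / τ) (-1 / τ) =
      (τ / Complex.I) ^ ((1 : ℂ) / 2) *
        Complex.exp ((Real.pi : ℂ) * Complex.I * t ^ 2 / τ) * jTheta3 t τ := by
  have hτ0 : τ ≠ 0 := fun h => by simp [h] at hτ
  have hτ' : 0 < (-1 / τ).im := by
    rw [neg_div, neg_im, one_div, inv_im, neg_div, neg_neg]
    exact div_pos hτ (normSq_pos.mpr hτ0)
  rw [JTP.jTheta3_eq_jacobiTheta₂ _ hτ' (t / τ), JTP.jTheta3_eq_jacobiTheta₂ τ hτ t]
  have hbne : -I * τ ≠ 0 := mul_ne_zero (neg_ne_zero.mpr I_ne_zero) hτ0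
  have hSne : (-I * τ) ^ ((1 : ℂ) / 2) ≠ 0 := by
    rw [Complex.cpow_def_of_ne_zero hbne]
    exact Complex.exp_ne_zero _
  have hbase : τ / Complex.I = -I * τ := by
    rw [div_eq_mul_inv, Complex.inv_I]
    ring
  rw [hbase]
  have FE := jacobiTheta₂_functional_equation t τ
  rw [FE, show -(π : ℂ) * I * t ^ 2 / τ = -((π : ℂ) * I * t ^ 2 / τ) by ring, Complex.exp_neg]
  field_simp [hSne]
end
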